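/- arXiv:0909.4370 — 7 statements merged into one kernel-verified Lean document; each statement's English description precedes it below -/
import Mathlib

section
/- In a tree T with N vertices, for any two adjacent vertices u and v, the rumor centralities satisfy R(u,T) = R(v,T) · T_u^v / (N - T_u^v). -/
noncomputable section

/-- The support (list of vertices) of the unique path from `a` to `b` in a connected graph. -/
def pathSupport {V : Type*} [DecidableEq V] (G : SimpleGraph V) (hG : G.Connected)
    (a b : V) : List V :=
  ((hG.preconnected a b).some.toPath : G.Walk a b).support

/-- `inSub G hG root u x` says that `x` belongs to the subtree rooted at `u`
when the tree `G` is rooted at `root`, i.e. `u` lies on the unique path from `root` to `x`. -/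
def inSub {V : Type*} [DecidableEq V] (G : SimpleGraph V) (hG : G.IsTree) (root u x : V) :
    Prop :=
  u ∈ pathSupport G hG.isConnected root x

/-- `subSize G hG root u` is the number of vertices of the subtree rooted at `u`
with respect to the root `root` (the quantity `T_u^root`). -/
def subSize {V : Type*} [DecidableEq V] (G : SimpleGraph V) (hG : G.IsTree) (root u : V) : ℕ :=
  Nat.card {x : V // inSub G hG root u x}

/-- `permCountOn G S u` is the number of permitted permutations of the vertex set `S`:
bijections `σ : Fin |S| ≃ S` starting at `u` such that every vertex appears after
some already-placed neighbor. -/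
def permCountOn {V : Type*} (G : SimpleGraph V) (S : Set V) (u : V) : ℕ :=
  Nat.card {σ : Fin (Nat.card S) ≃ S //
    (∀ i : Fin (Nat.card S), (i : ℕ) = 0 → (σ i : V) = u) ∧
    ∀ k : Fin (Nat.card S), 0 < (k : ℕ) →
      ∃ j : Fin (Nat.card S), (j : ℕ) < (k : ℕ) ∧ G.Adj (σ j : V) (σ k : V)}

/-- The rumor centrality `R(w,T) = N! / ∏_x T_x^w`. -/
def rumorCent {V : Type*} [Fintype V] [DecidableEq V] (G : SimpleGraph V) (hG : G.IsTree)
    (w : V) : ℚ :=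
  (Nat.factorial (Fintype.card V) : ℚ) / ∏ x : V, (subSize G hG w x : ℚ)

namespace RumorAux

open SimpleGraph Walk

variable {V : Type*} [DecidableEq V] {G : SimpleGraph V}

/-- For any actual path from `root` to `x`, membership of `u` in its support is
equivalent to `inSub`. -/
lemma inSub_iff (hG : G.IsTree) {root u x : V} {p : G.Walk root x} (hp : p.IsPath) :
    inSub G hG root u x ↔ u ∈ p.support := by
  obtain ⟨q, -, hq⟩ := hG.existsUnique_path root x
  have h1 : ((hG.isConnected.preconnected root x).some.toPath : G.Walk root x) = q :=
    hq _ ((hG.isConnected.preconnected root x).some.toPath.property)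
  have h2 : p = q := hq _ hp
  unfold inSub pathSupport
  rw [h1, h2]

lemma inSub_adj (hG : G.IsTree) {u v : V} (huv : G.Adj u v) (y : V) :
    inSub G hG u v y ↔ ¬ inSub G hG v u y := by
  set p : G.Walk v y := ((hG.isConnected.preconnected v y).some.toPath : G.Walk v y) with hpdef
  have hp : p.IsPath := ((hG.isConnected.preconnected v y).some.toPath).property
  by_cases hu : u ∈ p.support
  · have hvu : inSub G hG v u y := (inSub_iff hG hp).2 hu
    have hdrop : (p.dropUntil u hu).IsPath := hp.dropUntil hu
    have hmem : v ∉ (p.dropUntil u hu).support := by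
      intro hv
      have hnd : p.support.Nodup := hp.support_nodup
      rw [← take_spec p hu, support_append] at hnd
      have hdis := (List.nodup_append'.mp hnd).2.2
      have hv1 : v ∈ (p.takeUntil u hu).support := start_mem_support _
      have hv2 : v ∈ (p.dropUntil u hu).support.tail := by
        have : (p.dropUntil u hu).support = u :: (p.dropUntil u hu).support.tail := by
          rw [support_eq_cons]; rfl
        rw [this] at hv
        rcases List.mem_cons.mp hv with h | h
        · exact absurd h huv.ne'
        · exact h
      exact hdis hv1 hv2
    have : ¬ inSub G hG u v y := by
      rw [inSub_iff hG hdrop]; exact hmem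
    simp [this, hvu]
  · have hcons : (Walk.cons huv p).IsPath := hp.cons hu
    have h1 : inSub G hG u v y := by
      rw [inSub_iff hG hcons]
      exact List.mem_cons_of_mem _ (start_mem_support p)
    have h2 : ¬ inSub G hG v u y := by
      rw [inSub_iff hG hp]; exact hu
    simp [h1, h2]

lemma inSub_move (hG : G.IsTree) {u v : V} (huv : G.Adj u v) {x : V} (hxu : x ≠ u) (y : V)
    (h : inSub G hG u x y) : inSub G hG v x y := by
  set p : G.Walk v y := ((hG.isConnected.preconnected v y).some.toPath : G.Walk v y) with hpdef
  have hp : p.IsPath := ((hG.isConnected.preconnected v y).some.toPath).property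
  rw [inSub_iff hG hp]
  by_cases hu : u ∈ p.support
  · have hdrop : (p.dropUntil u hu).IsPath := hp.dropUntil hu
    rw [inSub_iff hG hdrop] at h
    exact support_dropUntil_subset p hu h
  · have hcons : (Walk.cons huv p).IsPath := hp.cons hu
    rw [inSub_iff hG hcons] at h
    rcases List.mem_cons.mp h with h | h
    · exact absurd h hxu
    · exact h

lemma inSub_comm (hG : G.IsTree) {u v : V} (huv : G.Adj u v) {x : V} (hxu : x ≠ u)
    (hxv : x ≠ v) (y : V) : inSub G hG u x y ↔ inSub G hG v x y :=
  ⟨inSub_move hG huv hxu y, inSub_move hG huv.symm hxv y⟩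

variable [Fintype V]

lemma subSize_comm (hG : G.IsTree) {u v : V} (huv : G.Adj u v) {x : V} (hxu : x ≠ u)
    (hxv : x ≠ v) : subSize G hG u x = subSize G hG v x :=
  Nat.card_congr (Equiv.subtypeEquivRight (inSub_comm hG huv hxu hxv))

lemma subSize_root (hG : G.IsTree) (root : V) : subSize G hG root root = Fintype.card V := by
  rw [subSize, ← Nat.card_eq_fintype_card]
  exact Nat.card_congr (Equiv.subtypeUnivEquiv fun y =>
    (inSub_iff hG ((hG.isConnected.preconnected root y).some.toPath).property).2
      (start_mem_support _))

lemma subSize_pos (hG : G.IsTree) (root x : V) : 0 < subSize G hG root x := by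
  have : Nonempty {y : V // inSub G hG root x y} :=
    ⟨⟨x, (inSub_iff hG ((hG.isConnected.preconnected root x).some.toPath).property).2
      (end_mem_support _)⟩⟩
  exact Nat.card_pos

lemma subSize_add (hG : G.IsTree) {u v : V} (huv : G.Adj u v) :
    subSize G hG u v + subSize G hG v u = Fintype.card V := by
  classical
  have h1 : subSize G hG u v = Fintype.card {y : V // ¬ inSub G hG v u y} := by
    rw [subSize, ← Nat.card_eq_fintype_card]
    exact Nat.card_congr (Equiv.subtypeEquivRight (inSub_adj hG huv))
  have h2 : subSize G hG v u = Fintype.card {y : V // inSub G hG v u y} := by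
    rw [subSize, Nat.card_eq_fintype_card]
  rw [h1, h2, Fintype.card_subtype_compl,
    Nat.sub_add_cancel (Fintype.card_subtype_le _)]

end RumorAux

/-- For adjacent vertices `u, v` of a tree on `N` vertices,
`R(u,T) = R(v,T) · T_u^v / (N - T_u^v)`. -/

theorem rumorCent_adj_ratio {V : Type*} [Fintype V] [DecidableEq V]
    (G : SimpleGraph V) (hG : G.IsTree) (u v : V) (huv : G.Adj u v) :
    rumorCent G hG u =
      rumorCent G hG v * (subSize G hG v u : ℚ) /
        ((Fintype.card V : ℚ) - (subSize G hG v u : ℚ)) := by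
  classical
  have hne : u ≠ v := huv.ne
  set N := Fintype.card V
  -- split products
  have hvmem : v ∈ (Finset.univ.erase u) := Finset.mem_erase.mpr ⟨hne.symm, Finset.mem_univ v⟩
  have hsplit : ∀ w : V, ∏ x : V, (subSize G hG w x : ℚ) =
      (subSize G hG w u : ℚ) * ((subSize G hG w v : ℚ) *
        ∏ x ∈ (Finset.univ.erase u).erase v, (subSize G hG w x : ℚ)) := by
    intro w
    rw [← Finset.mul_prod_erase Finset.univ _ (Finset.mem_univ u),
      ← Finset.mul_prod_erase _ _ hvmem]
  have hC : ∏ x ∈ (Finset.univ.erase u).erase v, (subSize G hG u x : ℚ) =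
      ∏ x ∈ (Finset.univ.erase u).erase v, (subSize G hG v x : ℚ) := by
    apply Finset.prod_congr rfl
    intro x hx
    obtain ⟨hxv, hxu⟩ : x ≠ v ∧ x ≠ u := by
      simpa [Finset.mem_erase] using hx
    rw [RumorAux.subSize_comm hG huv hxu hxv]
  set C : ℚ := ∏ x ∈ (Finset.univ.erase u).erase v, (subSize G hG v x : ℚ) with hCdef
  have hCpos : 0 < C := Finset.prod_pos fun x _ => by
    exact_mod_cast RumorAux.subSize_pos hG v x
  set a := subSize G hG v u
  set b := subSize G hG u v
  have hab : b + a = N := RumorAux.subSize_add hG huv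
  have hapos : 0 < a := RumorAux.subSize_pos hG v u
  have hbpos : 0 < b := RumorAux.subSize_pos hG u v
  have hNpos : 0 < N := Fintype.card_pos_iff.mpr ⟨u⟩
  have hNb : (N : ℚ) - a = b := by
    have : (b : ℚ) + a = N := by exact_mod_cast hab
    linarith
  rw [rumorCent, rumorCent, hsplit u, hsplit v, hC,
    RumorAux.subSize_root hG u, RumorAux.subSize_root hG v, hNb]
  have ha : (a : ℚ) ≠ 0 := by positivity
  have hb : (b : ℚ) ≠ 0 := by positivity
  have hN : (N : ℚ) ≠ 0 := by positivity
  have hCne : C ≠ 0 := ne_of_gt hCpos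
  simp only [← hCdef, show subSize G hG u v = b from rfl, show subSize G hG v u = a from rfl,
    show Fintype.card V = N from rfl]
  field_simp
end
end

section
/- In a tree T with N vertices, if a vertex v* is a rumor center (i.e., R(v*,T) ≥ R(v,T) for all v), then for every vertex v ≠ v*, the subtree of T rooted at v with respect to root v* satisfies T_v^{v*} ≤ N/2. -/
noncomputable section

section Aux

variable {V : Type*} [DecidableEq V] {G : SimpleGraph V} (hG : G.IsTree)

include hG

lemma tree_walk_eq {a b : V} (p q : G.Walk a b) (hp : p.IsPath) (hq : q.IsPath) : p = q := by
  obtain ⟨r, -, hu⟩ := hG.existsUnique_path a b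
  rw [hu p hp, hu q hq]

lemma pathSupport_eq {a b : V} (p : G.Walk a b) (hp : p.IsPath) :
    pathSupport G hG.isConnected a b = p.support := by
  unfold pathSupport
  exact congrArg SimpleGraph.Walk.support
    (tree_walk_eq hG _ p ((hG.isConnected.preconnected a b).some.toPath).2 hp)

lemma inSub_iff {r u x : V} (p : G.Walk r x) (hp : p.IsPath) :
    inSub G hG r u x ↔ u ∈ p.support := by
  unfold inSub
  rw [pathSupport_eq hG p hp]

lemma inSub_self (r x : V) : inSub G hG r x x := by
  unfold inSub pathSupport
  exact SimpleGraph.Walk.end_mem_support _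

lemma inSub_root (r x : V) : inSub G hG r r x := by
  unfold inSub pathSupport
  exact SimpleGraph.Walk.start_mem_support _

/-- For adjacent `r, s`, every vertex is on exactly one side. -/
lemma inSub_adj_not {r s : V} (h : G.Adj r s) (y : V) :
    inSub G hG s r y ↔ ¬ inSub G hG r s y := by
  set P := (hG.isConnected.preconnected r y).some.toPath with hP
  have hp : (P : G.Walk r y).IsPath := P.2
  by_cases hs : s ∈ (P : G.Walk r y).support
  · have hd : ((P : G.Walk r y).dropUntil s hs).IsPath := hp.dropUntil hs
    rw [inSub_iff hG _ hd, inSub_iff hG _ hp]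
    simp only [hs, not_true_eq_false, iff_false]
    intro hr
    have hnd := hp.support_nodup
    rw [← SimpleGraph.Walk.take_spec (P : G.Walk r y) hs,
      SimpleGraph.Walk.support_append] at hnd
    have hdisj := List.disjoint_of_nodup_append hnd
    have hrt : r ∈ ((P : G.Walk r y).takeUntil s hs).support :=
      SimpleGraph.Walk.start_mem_support _
    have : r ∉ ((P : G.Walk r y).dropUntil s hs).support.tail := fun hmem => hdisj hrt hmem
    rw [SimpleGraph.Walk.support_eq_cons ((P : G.Walk r y).dropUntil s hs)] at hr
    rcases List.mem_cons.1 hr with hr | hr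
    · exact h.ne hr
    · exact this hr
  · have hc : (SimpleGraph.Walk.cons h.symm (P : G.Walk r y)).IsPath := hp.cons hs
    rw [inSub_iff hG _ hc, inSub_iff hG _ hp]
    simp [hs, SimpleGraph.Walk.support_cons, SimpleGraph.Walk.start_mem_support]

lemma inSub_adj_aux {r s x : V} (h : G.Adj r s) (hxr : x ≠ r) (hxs : x ≠ s) (y : V)
    (hx : inSub G hG r x y) : inSub G hG s x y := by
  set P := (hG.isConnected.preconnected r y).some.toPath with hP
  have hp : (P : G.Walk r y).IsPath := P.2
  rw [inSub_iff hG _ hp] at hx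
  by_cases hs : s ∈ (P : G.Walk r y).support
  · have hd : ((P : G.Walk r y).dropUntil s hs).IsPath := hp.dropUntil hs
    rw [inSub_iff hG _ hd]
    by_contra hxd
    have hsplit := SimpleGraph.Walk.take_spec (P : G.Walk r y) hs
    have hx' : x ∈ ((P : G.Walk r y).takeUntil s hs).support := by
      rw [← hsplit, SimpleGraph.Walk.support_append] at hx
      rcases List.mem_append.1 hx with hx1 | hx2
      · exact hx1
      · exact absurd (List.mem_of_mem_tail hx2) hxd
    -- the take is the unique path from r to s, which is the single edge
    have hedge : (SimpleGraph.Walk.cons h (SimpleGraph.Walk.nil : G.Walk s s)).IsPath := by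
      rw [SimpleGraph.Walk.cons_isPath_iff]
      exact ⟨SimpleGraph.Walk.IsPath.nil, by simp [h.ne]⟩
    have := tree_walk_eq hG ((P : G.Walk r y).takeUntil s hs)
      (SimpleGraph.Walk.cons h SimpleGraph.Walk.nil) (hp.takeUntil hs) hedge
    rw [this] at hx'
    simp only [SimpleGraph.Walk.support_cons, SimpleGraph.Walk.support_nil,
      List.mem_cons, List.mem_singleton] at hx'
    rcases hx' with hx' | hx' | hx'
    · exact hxr hx'
    · exact hxs hx'
    · exact absurd hx' List.not_mem_nil
  · have hc : (SimpleGraph.Walk.cons h.symm (P : G.Walk r y)).IsPath := hp.cons hs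
    rw [inSub_iff hG _ hc]
    simp [SimpleGraph.Walk.support_cons, hx]

lemma inSub_adj_eq {r s x : V} (h : G.Adj r s) (hxr : x ≠ r) (hxs : x ≠ s) (y : V) :
    inSub G hG r x y ↔ inSub G hG s x y :=
  ⟨inSub_adj_aux hG h hxr hxs y, inSub_adj_aux hG h.symm hxs hxr y⟩

/-- If `x` lies on the path from `r` to `v`, then the subtree of `v` is contained
in the subtree of `x`. -/
lemma inSub_trans {r x v : V} (hx : inSub G hG r x v) (y : V)
    (hv : inSub G hG r v y) : inSub G hG r x y := by
  set Q := (hG.isConnected.preconnected r y).some.toPath with hQ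
  have hq : (Q : G.Walk r y).IsPath := Q.2
  rw [inSub_iff hG _ hq] at hv ⊢
  have ht : ((Q : G.Walk r y).takeUntil v hv).IsPath := hq.takeUntil hv
  rw [inSub_iff hG _ ht] at hx
  exact SimpleGraph.Walk.support_takeUntil_subset _ hv hx

omit hG in
lemma exists_second {a b : V} (p : G.Walk a b) (hab : a ≠ b) :
    ∃ u, G.Adj a u ∧ u ∈ p.support := by
  cases p with
  | nil => exact absurd rfl hab
  | cons h q =>
    exact ⟨_, h, by simp [SimpleGraph.Walk.support_cons]⟩

end Aux

section Main

variable {V : Type*} [Fintype V] [DecidableEq V] {G : SimpleGraph V} (hG : G.IsTree)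

lemma subSize_eq_ncard (r u : V) : subSize G hG r u = Set.ncard {x | inSub G hG r u x} :=
  Nat.card_coe_set_eq _

lemma subSize_pos (r u : V) : 0 < subSize G hG r u := by
  have : Nonempty {x : V // inSub G hG r u x} := ⟨⟨u, inSub_self hG r u⟩⟩
  exact Nat.card_pos

lemma subSize_root (r : V) : subSize G hG r r = Fintype.card V := by
  unfold subSize
  rw [Nat.card_congr (Equiv.subtypeUnivEquiv (fun x => inSub_root hG r x)),
    Nat.card_eq_fintype_card]

lemma subSize_adj_add (r s : V) (h : G.Adj r s) :
    subSize G hG r s + subSize G hG s r = Fintype.card V := by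
  rw [subSize_eq_ncard, subSize_eq_ncard]
  have hcompl : {x | inSub G hG s r x} = {x | inSub G hG r s x}ᶜ := by
    ext y
    simp [inSub_adj_not hG h y]
  rw [hcompl, Set.ncard_add_ncard_compl, Nat.card_eq_fintype_card]

lemma subSize_adj_eq (r s x : V) (h : G.Adj r s) (hxr : x ≠ r) (hxs : x ≠ s) :
    subSize G hG r x = subSize G hG s x := by
  rw [subSize_eq_ncard, subSize_eq_ncard]
  congr 1
  ext y
  exact inSub_adj_eq hG h hxr hxs y

lemma subSize_mono (r x v : V) (hx : inSub G hG r x v) :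
    subSize G hG r v ≤ subSize G hG r x := by
  rw [subSize_eq_ncard, subSize_eq_ncard]
  exact Set.ncard_le_ncard (fun y hy => inSub_trans hG hx y hy) (Set.toFinite _)

lemma prod_pos (w : V) : 0 < ∏ x : V, (subSize G hG w x : ℚ) := by
  apply Finset.prod_pos
  intro x _
  exact_mod_cast subSize_pos hG w x

/-- The key comparison for adjacent vertices. -/
lemma adj_half (r s : V) (h : G.Adj r s)
    (hle : rumorCent G hG s ≤ rumorCent G hG r) :
    2 * subSize G hG r s ≤ Fintype.card V := by
  have hPr : 0 < ∏ x : V, (subSize G hG r x : ℚ) := prod_pos hG r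
  have hPs : 0 < ∏ x : V, (subSize G hG s x : ℚ) := prod_pos hG s
  have hfact : (0 : ℚ) < (Nat.factorial (Fintype.card V) : ℚ) := by
    exact_mod_cast Nat.factorial_pos _
  have hprod : ∏ x : V, (subSize G hG r x : ℚ) ≤ ∏ x : V, (subSize G hG s x : ℚ) := by
    unfold rumorCent at hle
    rw [div_le_div_iff₀ hPs hPr] at hle
    exact le_of_mul_le_mul_left hle hfact
  -- peel off r and s from both products
  have hrs : s ∈ (Finset.univ.erase r : Finset V) := by
    simp [h.ne']
  have hsr : r ∈ (Finset.univ.erase s : Finset V) := by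
    simp [h.ne]
  have hre : ((Finset.univ.erase r).erase s : Finset V) = (Finset.univ.erase s).erase r := by
    rw [Finset.erase_right_comm]
  have hPrsplit : ∏ x : V, (subSize G hG r x : ℚ)
      = (subSize G hG r r : ℚ) * ((subSize G hG r s : ℚ)
        * ∏ x ∈ (Finset.univ.erase r).erase s, (subSize G hG r x : ℚ)) := by
    rw [← Finset.mul_prod_erase _ _ (Finset.mem_univ r), ← Finset.mul_prod_erase _ _ hrs]
  have hPssplit : ∏ x : V, (subSize G hG s x : ℚ)
      = (subSize G hG s s : ℚ) * ((subSize G hG s r : ℚ)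
        * ∏ x ∈ (Finset.univ.erase s).erase r, (subSize G hG s x : ℚ)) := by
    rw [← Finset.mul_prod_erase _ _ (Finset.mem_univ s), ← Finset.mul_prod_erase _ _ hsr]
  have hrest : ∏ x ∈ (Finset.univ.erase r).erase s, (subSize G hG r x : ℚ)
      = ∏ x ∈ (Finset.univ.erase s).erase r, (subSize G hG s x : ℚ) := by
    rw [hre]
    apply Finset.prod_congr rfl
    intro x hx
    have hxr : x ≠ r := Finset.ne_of_mem_erase hx
    have hxs : x ≠ s := Finset.ne_of_mem_erase (Finset.mem_of_mem_erase hx)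
    rw [subSize_adj_eq hG r s x h hxr hxs]
  have hQpos : 0 < ∏ x ∈ (Finset.univ.erase s).erase r, (subSize G hG s x : ℚ) := by
    apply Finset.prod_pos
    intro x _
    exact_mod_cast subSize_pos hG s x
  rw [hPrsplit, hPssplit, hrest, subSize_root hG r, subSize_root hG s] at hprod
  have hNpos : (0 : ℚ) < (Fintype.card V : ℚ) := by
    have : Nonempty V := ⟨r⟩
    exact_mod_cast Fintype.card_pos
  have hTU : (subSize G hG r s : ℚ) ≤ (subSize G hG s r : ℚ) := by
    have h1 := le_of_mul_le_mul_left hprod hNpos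
    exact le_of_mul_le_mul_right h1 hQpos
  have hTU' : subSize G hG r s ≤ subSize G hG s r := by exact_mod_cast hTU
  have hsum := subSize_adj_add hG r s h
  omega

end Main

/-- If `v*` is a rumor center of a tree on `N` vertices, then every subtree with
respect to the root `v*` has size at most `N/2`. -/
theorem rumor_center_subtree_le_half {V : Type*} [Fintype V] [DecidableEq V]
    (G : SimpleGraph V) (hG : G.IsTree) (vstar : V)
    (hmax : ∀ v : V, rumorCent G hG v ≤ rumorCent G hG vstar) :
    ∀ v : V, v ≠ vstar → (subSize G hG vstar v : ℚ) ≤ (Fintype.card V : ℚ) / 2 := by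
  intro v hv
  set P := (hG.isConnected.preconnected vstar v).some.toPath with hP
  have hp : (P : G.Walk vstar v).IsPath := P.2
  obtain ⟨u, hadj, hu⟩ := exists_second (P : G.Walk vstar v) (Ne.symm hv)
  have hu_in : inSub G hG vstar u v := (inSub_iff hG _ hp).2 hu
  have hmono := subSize_mono hG vstar u v hu_in
  have h2 := adj_half hG vstar u hadj (hmax u)
  have hmono' : (subSize G hG vstar v : ℚ) ≤ (subSize G hG vstar u : ℚ) := by
    exact_mod_cast hmono
  have h2' : 2 * (subSize G hG vstar u : ℚ) ≤ (Fintype.card V : ℚ) := by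
    exact_mod_cast h2
  rw [le_div_iff₀ (by norm_num : (0:ℚ) < 2)]
  linarith
end
end

section
/- A finite tree has at most 2 rumor centers, i.e., at most two vertices achieving the maximum value of rumor centrality R(·,T). -/
noncomputable section

namespace RumorAux
open SimpleGraph

variable {V : Type*} [DecidableEq V] {G : SimpleGraph V}

def thePath (hG : G.IsTree) (a b : V) : G.Walk a b :=
  ((hG.isConnected.preconnected a b).some.toPath : G.Walk a b)

variable (hG : G.IsTree)

lemma thePath_isPath (a b : V) : (thePath hG a b).IsPath :=
  ((hG.isConnected.preconnected a b).some.toPath).2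

lemma path_eq {a b : V} (p : G.Walk a b) (hp : p.IsPath) : p = thePath hG a b := by
  obtain ⟨q, _, hu⟩ := hG.existsUnique_path a b
  rw [hu p hp, hu _ (thePath_isPath hG a b)]

lemma start_mem (a b : V) : a ∈ (thePath hG a b).support :=
  SimpleGraph.Walk.start_mem_support _
lemma end_mem (a b : V) : b ∈ (thePath hG a b).support :=
  SimpleGraph.Walk.end_mem_support _
lemma supp_self (a : V) : (thePath hG a a).support = [a] := by
  rw [← path_eq hG (SimpleGraph.Walk.nil) SimpleGraph.Walk.IsPath.nil]; rfl
lemma supp_adj {a b : V} (h : G.Adj a b) : (thePath hG a b).support = [a, b] := by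
  have hp : (SimpleGraph.Walk.cons h SimpleGraph.Walk.nil).IsPath := by
    simp [SimpleGraph.Walk.cons_isPath_iff, h.ne]
  rw [← path_eq hG _ hp]; rfl
lemma mem_symm {a b x : V} (h : x ∈ (thePath hG a b).support) :
    x ∈ (thePath hG b a).support := by
  rw [← path_eq hG (thePath hG a b).reverse (thePath_isPath hG a b).reverse]
  simpa [SimpleGraph.Walk.support_reverse]
lemma cons_supp {a b y : V} (h : G.Adj a b) (hna : a ∉ (thePath hG b y).support) :
    (thePath hG a y).support = a :: (thePath hG b y).support := by
  have hp : (SimpleGraph.Walk.cons h (thePath hG b y)).IsPath :=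
    (SimpleGraph.Walk.cons_isPath_iff h _).2 ⟨thePath_isPath hG b y, hna⟩
  rw [← path_eq hG _ hp, SimpleGraph.Walk.support_cons]
lemma take_supp {a b m : V} (hm : m ∈ (thePath hG a b).support) :
    (thePath hG a m).support ⊆ (thePath hG a b).support := by
  rw [← path_eq hG ((thePath hG a b).takeUntil m hm)
    ((thePath_isPath hG a b).takeUntil hm)]
  exact SimpleGraph.Walk.support_takeUntil_subset _ hm

/-- complement lemma: across an edge, exactly one side. -/
lemma mem_compl {a b y : V} (hab : G.Adj a b) :
    b ∈ (thePath hG a y).support ↔ a ∉ (thePath hG b y).support := by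
  constructor
  · intro hb ha
    have hdup : (thePath hG b y).support
        = (thePath hG b a).support ++ ((thePath hG b y).dropUntil a ha).support.tail := by
      conv_lhs => rw [← SimpleGraph.Walk.take_spec (thePath hG b y) ha]
      rw [SimpleGraph.Walk.support_append]
      congr 1
      rw [← path_eq hG ((thePath hG b y).takeUntil a ha)
        ((thePath_isPath hG b y).takeUntil ha)]
    have hdrop : (thePath hG b y).dropUntil a ha = thePath hG a y :=
      path_eq hG _ ((thePath_isPath hG b y).dropUntil ha)
    have hnd := (thePath_isPath hG b y).support_nodup
    rw [hdup, supp_adj hG hab.symm, hdrop] at hnd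
    -- support = [b, a] ++ tail of (thePath a y).support, contains b twice
    have hbtail : b ∈ (thePath hG a y).support.tail := by
      have := SimpleGraph.Walk.support_eq_cons (thePath hG a y)
      rw [this] at hb
      rcases List.mem_cons.1 hb with h | h
      · exact absurd h hab.ne'
      · rw [this]; exact h
    simp only [List.cons_append, List.nil_append, List.nodup_cons] at hnd
    exact hnd.1 (List.mem_cons_of_mem _ hbtail)
  · intro ha
    rw [cons_supp hG hab ha]
    exact List.mem_cons_of_mem _ (start_mem hG b y)

lemma beyond_aux : ∀ {r m : V} (p : G.Walk r m), p.IsPath → ∀ {c y : V}, c ∈ p.support →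
    c ≠ m → m ∈ (thePath hG c y).support → m ∈ (thePath hG r y).support := by
  intro r m p
  induction p with
  | nil =>
    intro _ c y _ _ _
    exact start_mem hG _ _
  | cons h q ih =>
    rename_i r r' m
    intro hp c y hcmem hcm hmc
    rcases List.mem_cons.1 hcmem with rfl | hc'
    · exact hmc
    · have hq : q.IsPath := hp.of_cons
      have ihm : m ∈ (thePath hG r' y).support := ih hq hc' hcm hmc
      by_cases hra : r ∈ (thePath hG r' y).support
      · have hr'n : r' ∉ (thePath hG r y).support := (mem_compl hG h.symm).1 hra
        rw [cons_supp hG h.symm hr'n] at ihm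
        rcases List.mem_cons.1 ihm with rfl | hm2
        · exfalso
          rw [path_eq hG q hq, supp_self hG] at hc'
          exact hcm (List.mem_singleton.1 hc')
        · exact hm2
      · rw [cons_supp hG h hra]
        exact List.mem_cons_of_mem _ ihm

/-- key "beyond" lemma -/
lemma beyond {c m y r : V} (hcm : c ≠ m) (hmc : m ∈ (thePath hG c y).support)
    (hc : c ∈ (thePath hG r m).support) : m ∈ (thePath hG r y).support :=
  beyond_aux hG (thePath hG r m) (thePath_isPath hG r m) hc hcm hmc


section Counting

variable [Fintype V]

lemma subSize_eq (r u : V) :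
    _root_.subSize G hG r u
      = (Finset.univ.filter (fun x => u ∈ (thePath hG r x).support)).card := by
  have h : ∀ x : V, inSub G hG r u x ↔ u ∈ (thePath hG r x).support := fun x => Iff.rfl
  haveI : DecidablePred (inSub G hG r u) := fun x =>
    decidable_of_iff (u ∈ pathSupport G hG.isConnected r x) Iff.rfl
  rw [_root_.subSize, Nat.card_eq_fintype_card, Fintype.card_subtype]
  congr 1
  exact Finset.filter_congr (fun x _ => h x)

lemma subSize_self (w : V) : _root_.subSize G hG w w = Fintype.card V := by
  rw [subSize_eq hG]
  rw [Finset.filter_true_of_mem (fun x _ => start_mem hG w x)]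
  exact Finset.card_univ

lemma subSize_pos_s7 (r u : V) : 0 < _root_.subSize G hG r u := by
  rw [subSize_eq hG]
  exact Finset.card_pos.2 ⟨u, Finset.mem_filter.2 ⟨Finset.mem_univ _, end_mem hG r u⟩⟩

lemma subSize_add_s7 {a b : V} (hab : G.Adj a b) :
    _root_.subSize G hG a b + _root_.subSize G hG b a = Fintype.card V := by
  rw [subSize_eq hG, subSize_eq hG]
  have h : ∀ y : V, (a ∈ (thePath hG b y).support) ↔ ¬ (b ∈ (thePath hG a y).support) := by
    intro y
    constructor
    · intro ha hb
      exact (mem_compl hG hab).1 hb ha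
    · intro hb
      by_contra ha
      exact hb ((mem_compl hG hab).2 ha)
  have : (Finset.univ.filter (fun y => a ∈ (thePath hG b y).support))
      = (Finset.univ.filter (fun y => ¬ b ∈ (thePath hG a y).support)) := by
    apply Finset.filter_congr
    intro y _
    exact h y
  rw [this]
  exact Finset.card_filter_add_card_filter_not _

omit [Fintype V] in
lemma mem_trans {a b x y : V} (hab : G.Adj a b) (hx : x ≠ a)
    (h : x ∈ (thePath hG a y).support) : x ∈ (thePath hG b y).support := by
  by_cases ha : a ∈ (thePath hG b y).support
  · have hbn : b ∉ (thePath hG a y).support := (mem_compl hG hab.symm).1 ha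
    rw [cons_supp hG hab.symm hbn]
    exact List.mem_cons_of_mem _ h
  · rw [cons_supp hG hab ha] at h
    rcases List.mem_cons.1 h with rfl | h
    · exact absurd rfl hx
    · exact h

lemma subSize_eq_of_ne {a b x : V} (hab : G.Adj a b) (hxa : x ≠ a) (hxb : x ≠ b) :
    _root_.subSize G hG a x = _root_.subSize G hG b x := by
  rw [subSize_eq hG, subSize_eq hG]
  congr 1
  apply Finset.filter_congr
  intro y _
  exact ⟨mem_trans hG hab hxa, mem_trans hG hab.symm hxb⟩

/-- the product of subtree sizes -/
def fprod [Fintype V] (hG : G.IsTree) (w : V) : ℕ := ∏ x : V, _root_.subSize G hG w x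

lemma fprod_pos (w : V) : 0 < fprod hG w :=
  Finset.prod_pos (fun x _ => subSize_pos_s7 hG w x)

lemma fprod_identity {a b : V} (hab : G.Adj a b) :
    fprod hG a * _root_.subSize G hG b a = fprod hG b * _root_.subSize G hG a b := by
  have hne : a ≠ b := hab.ne
  have hbmem : b ∈ Finset.univ.erase a := Finset.mem_erase.2 ⟨hne.symm, Finset.mem_univ _⟩
  have hamem : a ∈ Finset.univ.erase b := Finset.mem_erase.2 ⟨hne, Finset.mem_univ _⟩
  have hfa : fprod hG a = _root_.subSize G hG a a *
      (_root_.subSize G hG a b * ∏ x ∈ (Finset.univ.erase a).erase b, _root_.subSize G hG a x) := by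
    rw [fprod, ← Finset.mul_prod_erase Finset.univ _ (Finset.mem_univ a),
      ← Finset.mul_prod_erase (Finset.univ.erase a) _ hbmem]
  have hfb : fprod hG b = _root_.subSize G hG b b *
      (_root_.subSize G hG b a * ∏ x ∈ (Finset.univ.erase b).erase a, _root_.subSize G hG b x) := by
    rw [fprod, ← Finset.mul_prod_erase Finset.univ _ (Finset.mem_univ b),
      ← Finset.mul_prod_erase (Finset.univ.erase b) _ hamem]
  have hset : (Finset.univ.erase b).erase a = (Finset.univ.erase a).erase b :=
    Finset.erase_right_comm
  have hprod : ∏ x ∈ (Finset.univ.erase a).erase b, _root_.subSize G hG a x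
      = ∏ x ∈ (Finset.univ.erase a).erase b, _root_.subSize G hG b x := by
    apply Finset.prod_congr rfl
    intro x hx
    have hxb : x ≠ b := (Finset.mem_erase.1 hx).1
    have hxa : x ≠ a := (Finset.mem_erase.1 (Finset.mem_erase.1 hx).2).1
    exact subSize_eq_of_ne hG hab hxa hxb
  rw [hfa, hfb, hset, hprod, subSize_self hG, subSize_self hG]
  ring

lemma rumor_le_iff (u v : V) :
    rumorCent G hG u ≤ rumorCent G hG v ↔ fprod hG v ≤ fprod hG u := by
  have hcast : ∀ w : V, (∏ x : V, (_root_.subSize G hG w x : ℚ)) = (fprod hG w : ℚ) := by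
    intro w
    rw [fprod]
    push_cast
    rfl
  rw [rumorCent, rumorCent, hcast, hcast]
  rw [div_le_div_iff_of_pos_left (by positivity) (by exact_mod_cast fprod_pos hG u)
    (by exact_mod_cast fprod_pos hG v)]
  exact_mod_cast Iff.rfl

lemma maximizer_step {u v : V} (hmax : ∀ w : V, rumorCent G hG w ≤ rumorCent G hG v)
    (huv : G.Adj u v) : Fintype.card V ≤ 2 * _root_.subSize G hG u v := by
  have h1 : fprod hG v ≤ fprod hG u := (rumor_le_iff hG u v).1 (hmax u)
  have h2 : fprod hG u * _root_.subSize G hG v u = fprod hG v * _root_.subSize G hG u v :=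
    fprod_identity hG huv
  have h3 : fprod hG u * _root_.subSize G hG v u ≤ fprod hG u * _root_.subSize G hG u v := by
    calc fprod hG u * _root_.subSize G hG v u
        = fprod hG v * _root_.subSize G hG u v := h2
      _ ≤ fprod hG u * _root_.subSize G hG u v :=
          Nat.mul_le_mul_right _ h1
  have h4 : _root_.subSize G hG v u ≤ _root_.subSize G hG u v :=
    Nat.le_of_mul_le_mul_left h3 (fprod_pos hG u)
  have h5 := subSize_add_s7 hG huv
  omega

end Counting

section Main

variable [Fintype V]

lemma maximizers_adj {a b : V}
    (ha : ∀ w : V, rumorCent G hG w ≤ rumorCent G hG a)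
    (hb : ∀ w : V, rumorCent G hG w ≤ rumorCent G hG b)
    (hne : a ≠ b) : G.Adj a b := by
  classical
  by_contra hadj
  -- decompose the path from a to b
  obtain ⟨p, hpe⟩ : ∃ p' : G.Walk a b, thePath hG a b = p' := ⟨_, rfl⟩
  cases p with
  | nil => exact hne rfl
  | cons hax1 q =>
  rename_i x1
  -- x1 is the second vertex on the path from a to b
  have hqpath : q.IsPath := by
    have := thePath_isPath hG a b
    rw [hpe] at this
    exact this.of_cons
  have hx1b : x1 ≠ b := by
    rintro rfl
    exact hadj hax1
  -- decompose the path from b to a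
  obtain ⟨p2, hpe2⟩ : ∃ p' : G.Walk b a, thePath hG b a = p' := ⟨_, rfl⟩
  cases p2 with
  | nil => exact hne rfl
  | cons hbu q2 =>
  rename_i u
  have hq2path : q2.IsPath := by
    have := thePath_isPath hG b a
    rw [hpe2] at this
    exact this.of_cons
  have hbq2 : b ∉ q2.support := by
    have := thePath_isPath hG b a
    rw [hpe2] at this
    exact ((SimpleGraph.Walk.cons_isPath_iff _ _).1 this).2
  have hua : u ≠ a := by
    rintro rfl
    exact hadj hbu.symm
  -- basic memberships
  have hx1mem : x1 ∈ (thePath hG a b).support := by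
    rw [hpe, SimpleGraph.Walk.support_cons]
    exact List.mem_cons_of_mem _ (SimpleGraph.Walk.start_mem_support q)
  have humem : u ∈ (thePath hG a b).support := by
    apply mem_symm hG
    rw [hpe2, SimpleGraph.Walk.support_cons]
    exact List.mem_cons_of_mem _ (SimpleGraph.Walk.start_mem_support q2)
  have hub : u ≠ b := hbu.ne'
  -- inclusion: {y : b beyond u} ⊆ {y : x1 beyond a}
  have hincl : ∀ y : V, b ∈ (thePath hG u y).support → x1 ∈ (thePath hG a y).support := by
    intro y hy
    have hbay : b ∈ (thePath hG a y).support := beyond hG hub hy humem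
    exact take_supp hG hbay hx1mem
  -- witness: x1 itself
  have hwit : b ∉ (thePath hG u x1).support := by
    intro hmem
    -- x1 lies on the path from u to a, whose support avoids b
    have hx1q2 : x1 ∈ q2.support := by
      have hx1ba : x1 ∈ (thePath hG b a).support := mem_symm hG hx1mem
      rw [hpe2, SimpleGraph.Walk.support_cons] at hx1ba
      rcases List.mem_cons.1 hx1ba with rfl | h
      · exact absurd rfl hx1b
      · exact h
    have hq2eq : q2.support = (thePath hG u a).support := by
      rw [path_eq hG q2 hq2path]
    have hx1ua : x1 ∈ (thePath hG u a).support := by rwa [hq2eq] at hx1q2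
    have : (thePath hG u x1).support ⊆ (thePath hG u a).support := take_supp hG hx1ua
    have hb2 : b ∈ (thePath hG u a).support := this hmem
    rw [← hq2eq] at hb2
    exact hbq2 hb2
  -- strict cardinality inequality
  have hlt : _root_.subSize G hG u b < _root_.subSize G hG a x1 := by
    rw [subSize_eq hG, subSize_eq hG]
    apply Finset.card_lt_card
    constructor
    · intro y hy
      rw [Finset.mem_filter] at hy ⊢
      exact ⟨hy.1, hincl y hy.2⟩
    · intro hsub
      have : x1 ∈ Finset.univ.filter (fun y => b ∈ (thePath hG u y).support) := by
        apply hsub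
        exact Finset.mem_filter.2 ⟨Finset.mem_univ _, end_mem hG a x1⟩
      exact hwit (Finset.mem_filter.1 this).2
  -- quantitative bounds
  have hb1 : Fintype.card V ≤ 2 * _root_.subSize G hG u b := maximizer_step hG hb hbu.symm
  have ha1 : Fintype.card V ≤ 2 * _root_.subSize G hG x1 a := maximizer_step hG ha hax1.symm
  have hsum : _root_.subSize G hG x1 a + _root_.subSize G hG a x1 = Fintype.card V :=
    subSize_add_s7 hG hax1.symm
  omega

omit [Fintype V] in
include hG in
lemma no_triangle {a b c : V} (hab : G.Adj a b) (hbc : G.Adj b c) (hca : G.Adj c a) : False := by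
  have hne_ab : a ≠ b := hab.ne
  have hne_bc : b ≠ c := hbc.ne
  have hne_ca : c ≠ a := hca.ne
  -- two distinct paths from a to b
  have hp1 : (SimpleGraph.Walk.cons hab SimpleGraph.Walk.nil).IsPath := by
    simp [SimpleGraph.Walk.cons_isPath_iff, hne_ab]
  have hp2 : (SimpleGraph.Walk.cons hca.symm
      (SimpleGraph.Walk.cons hbc.symm SimpleGraph.Walk.nil)).IsPath := by
    simp [SimpleGraph.Walk.cons_isPath_iff, hne_ca, hne_bc.symm, hne_ab, hne_ca.symm]
  have h1 := path_eq hG _ hp1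
  have h2 := path_eq hG _ hp2
  have := congrArg SimpleGraph.Walk.support (h1.trans h2.symm)
  simp [SimpleGraph.Walk.support_cons] at this

end Main

end RumorAux

/-- A finite tree has at most two rumor centers. -/
theorem card_rumor_centers_le_two {V : Type*} [Fintype V] [DecidableEq V]
    (G : SimpleGraph V) (hG : G.IsTree) :
    Nat.card {v : V // ∀ w : V, rumorCent G hG w ≤ rumorCent G hG v} ≤ 2 := by
  classical
  by_contra h
  push_neg at h
  rw [Nat.card_eq_fintype_card] at h
  obtain ⟨a, b, c, hab, hac, hbc⟩ := Fintype.two_lt_card_iff.1 h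
  have hab' : (a : V) ≠ (b : V) := fun he => hab (Subtype.ext he)
  have hac' : (a : V) ≠ (c : V) := fun he => hac (Subtype.ext he)
  have hbc' : (b : V) ≠ (c : V) := fun he => hbc (Subtype.ext he)
  have h1 : G.Adj (a : V) (b : V) := RumorAux.maximizers_adj hG a.2 b.2 hab'
  have h2 : G.Adj (b : V) (c : V) := RumorAux.maximizers_adj hG b.2 c.2 hbc'
  have h3 : G.Adj (c : V) (a : V) := RumorAux.maximizers_adj hG c.2 a.2 hac'.symm
  exact RumorAux.no_triangle hG h1 h2 h3
end
end

section
/- If N_1(t) and N_2(t) are independent unit-rate Poisson random variables with parameter t, then P(N_1(t)=N_2(t)) + (1/2)·(P(N_1(t)=N_2(t)+1) + P(N_1(t)+1=N_2(t))) = Σ_{k=0}^∞ (e^{-t} t^k/k!)^2 (1 + t/(k+1)), and this quantity is O(1/√t) as t → ∞. -/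
open MeasureTheory ProbabilityTheory Filter Asymptotics

noncomputable def pois (t : ℝ) (k : ℕ) : ℝ := Real.exp (-t) * t ^ k / (Nat.factorial k : ℝ)

lemma pois_def (t : ℝ) (k : ℕ) : pois t k = Real.exp (-t) * t ^ k / (Nat.factorial k : ℝ) := rfl

lemma pois_nonneg {t : ℝ} (ht : 0 ≤ t) (k : ℕ) : 0 ≤ pois t k := by
  unfold pois; positivity

lemma summable_pois (t : ℝ) : Summable (pois t) := by
  have h : pois t = fun k => Real.exp (-t) * (t ^ k / (Nat.factorial k : ℝ)) := by
    funext k; unfold pois; ring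
  rw [h]
  exact (Real.summable_pow_div_factorial t).mul_left _

lemma tsum_pois (t : ℝ) : ∑' k, pois t k = 1 := by
  have h : pois t = fun k => Real.exp (-t) * (t ^ k / (Nat.factorial k : ℝ)) := by
    funext k; unfold pois; ring
  have he : ∑' k : ℕ, t ^ k / (Nat.factorial k : ℝ) = Real.exp t := by
    rw [Real.exp_eq_exp_ℝ, NormedSpace.exp_eq_tsum_div]
  rw [h, tsum_mul_left, he, ← Real.exp_add]
  simp

lemma pois_le_one {t : ℝ} (ht : 0 ≤ t) (k : ℕ) : pois t k ≤ 1 := by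
  rw [← tsum_pois t]
  exact (summable_pois t).le_tsum k (fun j _ => pois_nonneg ht j)

lemma pois_succ (t : ℝ) (k : ℕ) : pois t (k + 1) = pois t k * (t / (k + 1)) := by
  unfold pois
  rw [pow_succ, Nat.factorial_succ]
  have h1 : (Nat.factorial k : ℝ) ≠ 0 := by positivity
  push_cast
  field_simp

lemma pois_term_eq (t : ℝ) (k : ℕ) :
    pois t k ^ 2 * (1 + t / (k + 1)) = pois t k ^ 2 + pois t k * pois t (k + 1) := by
  rw [pois_succ]; ring

lemma summable_pois_sq {t : ℝ} (ht : 0 ≤ t) :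
    Summable (fun k => pois t k * pois t k) := by
  refine Summable.of_nonneg_of_le (fun k => mul_nonneg (pois_nonneg ht k) (pois_nonneg ht k)) (fun k => ?_)
    (summable_pois t)
  calc pois t k * pois t k ≤ 1 * pois t k := by
        gcongr
        · exact pois_nonneg ht k
        · exact pois_le_one ht k
    _ = pois t k := one_mul _

lemma summable_pois_mul {t : ℝ} (ht : 0 ≤ t) :
    Summable (fun k => pois t k * pois t (k + 1)) := by
  refine Summable.of_nonneg_of_le
    (fun k => mul_nonneg (pois_nonneg ht k) (pois_nonneg ht (k + 1))) (fun k => ?_)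
    (summable_pois t)
  calc pois t k * pois t (k + 1) ≤ pois t k * 1 := by
        gcongr
        · exact pois_nonneg ht k
        · exact pois_le_one ht (k + 1)
    _ = pois t k := mul_one _

lemma fact_lb (n : ℕ) (hn : 1 ≤ n) :
    Real.sqrt n * ((n : ℝ) / Real.exp 1) ^ n ≤ (Nat.factorial n : ℝ) := by
  have hn0 : 0 < (n : ℝ) := by exact_mod_cast hn
  have h1 : (1 : ℝ) ≤ Stirling.stirlingSeq n := by
    have hpi : (1 : ℝ) ≤ Real.sqrt Real.pi := by
      rw [show (1:ℝ) = Real.sqrt 1 by simp]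
      exact Real.sqrt_le_sqrt (by linarith [Real.pi_gt_three])
    refine hpi.trans ?_
    refine le_of_tendsto Stirling.tendsto_stirlingSeq_sqrt_pi ?_
    filter_upwards [eventually_ge_atTop n] with m hm
    obtain ⟨a, rfl⟩ : ∃ a, n = a + 1 := ⟨n - 1, (Nat.succ_pred_eq_of_pos hn).symm⟩
    obtain ⟨b, rfl⟩ : ∃ b, m = b + 1 := ⟨m - 1, (Nat.succ_pred_eq_of_pos (by omega)).symm⟩
    exact Stirling.stirlingSeq'_antitone (by omega)
  have hb : 0 < Real.sqrt (2 * n) * ((n : ℝ) / Real.exp 1) ^ n := by positivity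
  rw [Stirling.stirlingSeq, one_le_div hb] at h1
  refine le_trans ?_ h1
  have h2 : Real.sqrt n ≤ Real.sqrt (2 * n) := Real.sqrt_le_sqrt (by linarith)
  gcongr

lemma pois_le_exp {t : ℝ} (ht : 0 < t) {k : ℕ} (hk : 1 ≤ k) :
    pois t k ≤ Real.exp ((k : ℝ) - t + k * Real.log (t / k)) / Real.sqrt k := by
  have hk0 : 0 < (k : ℝ) := by exact_mod_cast hk
  have htk : 0 < t / k := by positivity
  have e1 : Real.exp (k : ℝ) = Real.exp 1 ^ k := by rw [← Real.exp_nat_mul, mul_one]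
  have e2 : Real.exp ((k : ℝ) * Real.log (t / k)) = (t / k) ^ k := by
    rw [Real.exp_nat_mul, Real.exp_log htk]
  have hE : Real.exp ((k : ℝ) - t + k * Real.log (t / k))
      = Real.exp (-t) * t ^ k / ((k : ℝ) / Real.exp 1) ^ k := by
    rw [Real.exp_add, Real.exp_sub, e1, e2, div_pow, div_pow]
    rw [Real.exp_neg]
    have h1 : (0:ℝ) < Real.exp 1 := Real.exp_pos 1
    have h2 : (0:ℝ) < Real.exp t := Real.exp_pos t
    field_simp
  rw [hE, pois_def, div_div]
  have hfl := fact_lb k hk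
  gcongr
  linarith [hfl, mul_comm (Real.sqrt (k:ℝ)) (((k:ℝ) / Real.exp 1) ^ k)]

lemma pois_bound {t : ℝ} (ht : 64 ≤ t) (k : ℕ) : pois t k ≤ 2 / Real.sqrt t := by
  have ht0 : (0:ℝ) < t := by linarith
  have hst : 0 < Real.sqrt t := Real.sqrt_pos.mpr ht0
  have hst8 : 8 ≤ Real.sqrt t := by
    rw [show (8:ℝ) = Real.sqrt 64 by rw [show (64:ℝ) = 8^2 by norm_num, Real.sqrt_sq]; norm_num]
    exact Real.sqrt_le_sqrt ht
  have hsq : Real.sqrt t ^ 2 = t := Real.sq_sqrt ht0.le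
  rcases Nat.eq_zero_or_pos k with rfl | hk
  · rw [pois_def]
    simp only [pow_zero, Nat.factorial_zero, Nat.cast_one, mul_one, div_one]
    rw [Real.exp_neg, inv_eq_one_div, div_le_div_iff₀ (Real.exp_pos t) hst]
    have h3 : Real.sqrt t ≤ t := by nlinarith
    nlinarith [Real.add_one_le_exp t]
  · have hk0 : 0 < (k:ℝ) := by exact_mod_cast hk
    have hk1 : (1:ℝ) ≤ k := by exact_mod_cast hk
    have hmain := pois_le_exp ht0 hk
    rcases le_or_gt t (2 * k) with hcase | hcase
    · have hlog : Real.log (t / k) ≤ t / k - 1 := Real.log_le_sub_one_of_pos (by positivity)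
      have hE : (k : ℝ) - t + k * Real.log (t / k) ≤ 0 := by
        have h6 := mul_le_mul_of_nonneg_left hlog hk0.le
        have hexp : (k:ℝ) * (t / k - 1) = t - k := by field_simp
        nlinarith
      have h2 : pois t k ≤ 1 / Real.sqrt k := by
        refine hmain.trans ?_
        gcongr
        exact Real.exp_le_one_iff.mpr hE
      refine h2.trans ?_
      rw [div_le_div_iff₀ (by positivity) hst]
      have h4 : Real.sqrt t ≤ 2 * Real.sqrt k := by
        rw [show (2:ℝ) * Real.sqrt k = Real.sqrt (4 * k) by
          rw [show (4:ℝ) * k = 2^2 * k by norm_num, Real.sqrt_mul (by positivity),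
            Real.sqrt_sq (by norm_num)]]
        exact Real.sqrt_le_sqrt (by linarith)
      linarith
    · have hlog : Real.log (t / k) ≤ (t / k) / Real.exp 1 := by
        have h := Real.log_le_sub_one_of_pos (show 0 < t / k / Real.exp 1 by positivity)
        rw [Real.log_div (by positivity) (Real.exp_ne_zero 1), Real.log_exp] at h
        linarith
      have he1 : (8:ℝ)/3 ≤ Real.exp 1 := by
        have := Real.exp_one_gt_d9
        linarith
      have h5 : (k:ℝ) * Real.log (t / k) ≤ 3 * t / 8 := by
        have h6 : (k:ℝ) * Real.log (t/k) ≤ k * ((t/k)/Real.exp 1) :=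
          mul_le_mul_of_nonneg_left hlog hk0.le
        have h7 : (k:ℝ) * ((t/k)/Real.exp 1) = t / Real.exp 1 := by field_simp
        have h8 : t / Real.exp 1 ≤ 3 * t / 8 := by
          rw [div_le_div_iff₀ (Real.exp_pos 1) (by norm_num : (0:ℝ) < 8)]
          nlinarith
        linarith
      have hE : (k : ℝ) - t + k * Real.log (t / k) ≤ -t/8 := by
        have : (k:ℝ) ≤ t/2 := by linarith
        linarith
      have h2 : pois t k ≤ Real.exp (-t/8) := by
        refine hmain.trans ?_
        calc Real.exp ((k : ℝ) - t + k * Real.log (t / k)) / Real.sqrt k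
            ≤ Real.exp (-t/8) / 1 := by
              gcongr
              exact Real.one_le_sqrt.mpr hk1
          _ = Real.exp (-t/8) := by rw [div_one]
      refine h2.trans ?_
      have h9 : Real.sqrt t ≤ Real.exp (t/8) := by
        have := Real.add_one_le_exp (t/8)
        nlinarith
      rw [show -t/8 = -(t/8) by ring, Real.exp_neg, inv_eq_one_div,
        div_le_div_iff₀ (Real.exp_pos _) hst]
      nlinarith [Real.exp_pos (t/8)]

lemma measure_eq_tsum_aux {Ω : Type*} [MeasurableSpace Ω] (μ : Measure Ω)
    (X Y : Ω → ℕ) (hmX : Measurable X) (hmY : Measurable Y)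
    (h : IndepFun X Y μ) (f : ℕ → ℕ) :
    μ {ω | X ω = f (Y ω)} = ∑' k, μ (X ⁻¹' {f k}) * μ (Y ⁻¹' {k}) := by
  have hset : {ω | X ω = f (Y ω)} = ⋃ k, X ⁻¹' {f k} ∩ Y ⁻¹' {k} := by
    ext ω
    simp only [Set.mem_setOf_eq, Set.mem_iUnion, Set.mem_inter_iff, Set.mem_preimage,
      Set.mem_singleton_iff]
    constructor
    · intro hω; exact ⟨Y ω, hω, rfl⟩
    · rintro ⟨k, h1, rfl⟩; exact h1
  rw [hset, measure_iUnion ?_ ?_]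
  · exact tsum_congr fun k =>
      h.measure_inter_preimage_eq_mul _ _ (measurableSet_singleton _) (measurableSet_singleton _)
  · intro i j hij
    refine Set.disjoint_left.mpr ?_
    rintro ω ⟨-, hi⟩ ⟨-, hj⟩
    exact hij (hi.symm.trans hj)
  · exact fun k => (hmX (measurableSet_singleton _)).inter (hmY (measurableSet_singleton _))

lemma toReal_tsum_mul (a b : ℕ → ℝ) (ha : ∀ k, 0 ≤ a k) (hb : ∀ k, 0 ≤ b k) :
    (∑' k, ENNReal.ofReal (a k) * ENNReal.ofReal (b k)).toReal = ∑' k, a k * b k := by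
  rw [ENNReal.tsum_toReal_eq (fun k => ENNReal.mul_ne_top ENNReal.ofReal_ne_top
    ENNReal.ofReal_ne_top)]
  exact tsum_congr fun k => by
    rw [← ENNReal.ofReal_mul (ha k), ENNReal.toReal_ofReal (mul_nonneg (ha k) (hb k))]

/-- For independent Poisson(t) random variables `N₁(t)`, `N₂(t)`, the probability
`P(N₁=N₂) + (1/2)(P(N₁=N₂+1) + P(N₁+1=N₂))` equals `∑_k (e^{-t} t^k/k!)² (1 + t/(k+1))`,
and this quantity is `O(1/√t)` as `t → ∞`. -/
theorem line_detection_prob {Ω : Type*} [MeasurableSpace Ω] (μ : Measure Ω)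
    [IsProbabilityMeasure μ] (X Y : ℝ → Ω → ℕ)
    (hmX : ∀ t, Measurable (X t)) (hmY : ∀ t, Measurable (Y t))
    (hindep : ∀ t > 0, IndepFun (X t) (Y t) μ)
    (hX : ∀ t > 0, ∀ k : ℕ,
      μ {ω | X t ω = k} = ENNReal.ofReal (Real.exp (-t) * t ^ k / (Nat.factorial k : ℝ)))
    (hY : ∀ t > 0, ∀ k : ℕ,
      μ {ω | Y t ω = k} = ENNReal.ofReal (Real.exp (-t) * t ^ k / (Nat.factorial k : ℝ))) :
    (∀ t > 0,
      (μ {ω | X t ω = Y t ω}).toReal +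
          (1 / 2) * ((μ {ω | X t ω = Y t ω + 1}).toReal +
            (μ {ω | X t ω + 1 = Y t ω}).toReal) =
        ∑' k : ℕ,
          (Real.exp (-t) * t ^ k / (Nat.factorial k : ℝ)) ^ 2 * (1 + t / (k + 1))) ∧
    (fun t : ℝ => ∑' k : ℕ,
        (Real.exp (-t) * t ^ k / (Nat.factorial k : ℝ)) ^ 2 * (1 + t / (k + 1)))
      =O[atTop] fun t => 1 / Real.sqrt t := by
  constructor
  · intro t ht
    have ht0 : (0:ℝ) ≤ t := ht.le
    have hXp : ∀ k, μ (X t ⁻¹' {k}) = ENNReal.ofReal (pois t k) := fun k => hX t ht k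
    have hYp : ∀ k, μ (Y t ⁻¹' {k}) = ENNReal.ofReal (pois t k) := fun k => hY t ht k
    have e1 : μ {ω | X t ω = Y t ω}
        = ∑' k, ENNReal.ofReal (pois t k) * ENNReal.ofReal (pois t k) := by
      have h := measure_eq_tsum_aux μ (X t) (Y t) (hmX t) (hmY t) (hindep t ht) id
      simpa only [id, hXp, hYp] using h
    have e2 : μ {ω | X t ω = Y t ω + 1}
        = ∑' k, ENNReal.ofReal (pois t (k + 1)) * ENNReal.ofReal (pois t k) := by
      have h := measure_eq_tsum_aux μ (X t) (Y t) (hmX t) (hmY t) (hindep t ht) (fun n => n + 1)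
      simpa only [hXp, hYp] using h
    have e3 : μ {ω | X t ω + 1 = Y t ω}
        = ∑' k, ENNReal.ofReal (pois t (k + 1)) * ENNReal.ofReal (pois t k) := by
      have hs : {ω | X t ω + 1 = Y t ω} = {ω | Y t ω = X t ω + 1} := by
        ext ω; exact eq_comm
      have h := measure_eq_tsum_aux μ (Y t) (X t) (hmY t) (hmX t)
        (hindep t ht).symm (fun n => n + 1)
      rw [hs]
      simpa only [hXp, hYp] using h
    rw [e1, e2, e3, toReal_tsum_mul _ _ (pois_nonneg ht0) (pois_nonneg ht0),
      toReal_tsum_mul _ _ (fun k => pois_nonneg ht0 (k+1)) (pois_nonneg ht0)]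
    have hA : ∑' k, pois t k * pois t k = ∑' k, pois t k ^ 2 :=
      tsum_congr fun k => (sq (pois t k)).symm
    have hB : ∑' k, pois t (k + 1) * pois t k = ∑' k, pois t k * pois t (k + 1) :=
      tsum_congr fun k => mul_comm _ _
    have hsq : Summable (fun k => pois t k ^ 2) := by
      have := summable_pois_sq ht0
      simpa [sq] using this
    have hRHS : ∑' k : ℕ, pois t k ^ 2 * (1 + t / (k + 1))
        = ∑' k, pois t k ^ 2 + ∑' k, pois t k * pois t (k + 1) := by
      rw [← hsq.tsum_add (summable_pois_mul ht0)]
      exact tsum_congr fun k => pois_term_eq t k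
    have hgoal : ∑' k : ℕ, (Real.exp (-t) * t ^ k / (Nat.factorial k : ℝ)) ^ 2 * (1 + t / (k + 1))
        = ∑' k : ℕ, pois t k ^ 2 * (1 + t / (k + 1)) := rfl
    rw [hgoal, hRHS, hA, hB]
    ring
  · rw [isBigO_iff]
    refine ⟨4, ?_⟩
    filter_upwards [eventually_ge_atTop (64:ℝ)] with t ht
    have ht0 : (0:ℝ) < t := by linarith
    have hst : 0 < Real.sqrt t := Real.sqrt_pos.mpr ht0
    have hB := pois_bound ht
    have hnn : ∀ k : ℕ, 0 ≤ pois t k ^ 2 * (1 + t / (k + 1)) := by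
      intro k
      have := pois_nonneg ht0.le k
      positivity
    have hgoal : ∑' k : ℕ, (Real.exp (-t) * t ^ k / (Nat.factorial k : ℝ)) ^ 2 * (1 + t / (k + 1))
        = ∑' k : ℕ, pois t k ^ 2 * (1 + t / (k + 1)) := rfl
    have hsummL : Summable (fun k => pois t k ^ 2 + pois t k * pois t (k + 1)) := by
      refine Summable.add ?_ (summable_pois_mul ht0.le)
      have := summable_pois_sq ht0.le
      simpa [sq] using this
    have hsummR : Summable (fun k => 2 * (2 / Real.sqrt t) * pois t k) :=
      (summable_pois t).mul_left _
    have hle : ∑' k : ℕ, pois t k ^ 2 * (1 + t / (k + 1)) ≤ 4 / Real.sqrt t := by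
      calc ∑' k : ℕ, pois t k ^ 2 * (1 + t / (k + 1))
          = ∑' k, (pois t k ^ 2 + pois t k * pois t (k + 1)) :=
            tsum_congr fun k => pois_term_eq t k
        _ ≤ ∑' k, 2 * (2 / Real.sqrt t) * pois t k := by
            refine Summable.tsum_le_tsum (fun k => ?_) hsummL hsummR
            have h1 : pois t k ^ 2 ≤ (2 / Real.sqrt t) * pois t k := by
              rw [sq]
              exact mul_le_mul_of_nonneg_right (hB k) (pois_nonneg ht0.le k)
            have h2 : pois t k * pois t (k + 1) ≤ pois t k * (2 / Real.sqrt t) :=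
              mul_le_mul_of_nonneg_left (hB (k + 1)) (pois_nonneg ht0.le k)
            nlinarith [pois_nonneg ht0.le k]
        _ = 2 * (2 / Real.sqrt t) * ∑' k, pois t k := tsum_mul_left
        _ = 4 / Real.sqrt t := by rw [tsum_pois]; ring
    have hpos : 0 ≤ ∑' k : ℕ, pois t k ^ 2 * (1 + t / (k + 1)) := tsum_nonneg hnn
    rw [Real.norm_eq_abs, Real.norm_eq_abs, hgoal, abs_of_nonneg hpos,
      abs_of_nonneg (by positivity : (0:ℝ) ≤ 1 / Real.sqrt t)]
    calc ∑' k : ℕ, pois t k ^ 2 * (1 + t / (k + 1)) ≤ 4 / Real.sqrt t := hle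
      _ = 4 * (1 / Real.sqrt t) := by ring
end

section
/- For a ≥ 1 and n ≥ 2, the product C(n) = ∏_{i=1}^{n-1}(1 + 1/(a·i)) satisfies (n-1)^{1/a} e^{-ζ(2)/a} ≤ C(n) ≤ e·n^{1/a}, where ζ(2) = π²/6. -/
/-- For `a ≥ 1` and `n ≥ 2`, the product `C(n) = ∏_{i=1}^{n-1} (1 + 1/(a i))` satisfies
`(n-1)^{1/a} e^{-ζ(2)/a} ≤ C(n) ≤ e n^{1/a}`, where `ζ(2) = π²/6`. -/
theorem product_bounds (a : ℝ) (ha : 1 ≤ a) (n : ℕ) (hn : 2 ≤ n) :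
    ((n : ℝ) - 1) ^ ((1 : ℝ) / a) * Real.exp (-(Real.pi ^ 2 / 6) / a) ≤
        ∏ i ∈ Finset.Icc 1 (n - 1), (1 + 1 / (a * (i : ℝ))) ∧
      ∏ i ∈ Finset.Icc 1 (n - 1), (1 + 1 / (a * (i : ℝ))) ≤
        Real.exp 1 * (n : ℝ) ^ ((1 : ℝ) / a) := by
  have ha0 : (0:ℝ) < a := lt_of_lt_of_le one_pos ha
  set m := n - 1 with hm
  have hmn : m + 1 = n := by omega
  have hm1 : 1 ≤ m := by omega
  have hmr : (m : ℝ) = (n : ℝ) - 1 := by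
    have : ((m : ℕ) : ℝ) + 1 = (n : ℝ) := by exact_mod_cast congrArg (Nat.cast (R := ℝ)) hmn
    linarith
  have hnr : (1:ℝ) ≤ (n : ℝ) - 1 := by
    rw [← hmr]; exact_mod_cast hm1
  have hn0 : (0:ℝ) < n := by linarith
  have hpos : ∀ i ∈ Finset.Icc 1 m, (0:ℝ) < 1 + 1 / (a * (i : ℝ)) := by
    intro i hi
    have hi1 : 1 ≤ i := (Finset.mem_Icc.mp hi).1
    have : (0:ℝ) < a * i := by positivity
    positivity
  have hprodpos : (0:ℝ) < ∏ i ∈ Finset.Icc 1 m, (1 + 1 / (a * (i : ℝ))) :=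
    Finset.prod_pos hpos
  have hlogprod : Real.log (∏ i ∈ Finset.Icc 1 m, (1 + 1 / (a * (i : ℝ)))) =
      ∑ i ∈ Finset.Icc 1 m, Real.log (1 + 1 / (a * (i : ℝ))) :=
    Real.log_prod (fun i hi => (hpos i hi).ne')
  set S1 : ℝ := ∑ i ∈ Finset.Icc 1 m, ((i : ℝ))⁻¹ with hS1
  set S2 : ℝ := ∑ i ∈ Finset.Icc 1 m, ((i : ℝ))⁻¹ ^ 2 with hS2
  have hharm : ((harmonic m : ℚ) : ℝ) = S1 := by
    rw [harmonic_eq_sum_Icc]; push_cast; rfl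
  have hS1upper : S1 ≤ 1 + Real.log m := by
    rw [← hharm]; exact harmonic_le_one_add_log m
  have hS1lower : Real.log n ≤ S1 := by
    rw [← hharm, ← hmn]
    exact_mod_cast log_add_one_le_harmonic m
  have hS2le : S2 ≤ Real.pi ^ 2 / 6 := by
    have h := sum_le_hasSum (Finset.Icc 1 m)
      (fun i _ => by positivity : ∀ i ∉ Finset.Icc 1 m, (0:ℝ) ≤ 1 / (i:ℝ)^2) hasSum_zeta_two
    refine le_trans (le_of_eq ?_) h
    refine Finset.sum_congr rfl fun i _ => ?_
    rw [one_div, ← inv_pow]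
  have hub : ∑ i ∈ Finset.Icc 1 m, Real.log (1 + 1 / (a * (i : ℝ))) ≤ (1/a) * S1 := by
    rw [hS1, Finset.mul_sum]
    apply Finset.sum_le_sum
    intro i hi
    have h := Real.log_le_sub_one_of_pos (hpos i hi)
    have hi1 : (1:ℝ) ≤ i := by exact_mod_cast (Finset.mem_Icc.mp hi).1
    have he : (1:ℝ) + 1 / (a * i) - 1 = 1/a * (i:ℝ)⁻¹ := by
      field_simp
      ring
    linarith [he ▸ h]
  have hlb : (1/a) * S1 - (1/a) * S2 ≤
      ∑ i ∈ Finset.Icc 1 m, Real.log (1 + 1 / (a * (i : ℝ))) := by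
    rw [hS1, hS2, Finset.mul_sum, Finset.mul_sum, ← Finset.sum_sub_distrib]
    apply Finset.sum_le_sum
    intro i hi
    have hi1 : (1:ℝ) ≤ i := by exact_mod_cast (Finset.mem_Icc.mp hi).1
    have hi0 : (0:ℝ) < i := by linarith
    set x : ℝ := 1 / (a * i) with hx
    have hx0 : 0 < x := by positivity
    have h1 : 1 - (1 + x)⁻¹ ≤ Real.log (1 + x) :=
      Real.one_sub_inv_le_log_of_pos (by linarith)
    have h2 : x - x ^ 2 ≤ 1 - (1 + x)⁻¹ := by
      have hne : (1 + x) ≠ 0 := by positivity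
      have hc : (1 + x) * (1 + x)⁻¹ = 1 := mul_inv_cancel₀ hne
      nlinarith [mul_pos hx0 (mul_pos hx0 hx0), inv_pos.mpr (show (0:ℝ) < 1 + x by linarith)]
    have hxeq : x = 1/a * (i:ℝ)⁻¹ := by rw [hx]; field_simp
    have h3 : 1/a * (i:ℝ)⁻¹ - 1/a * ((i:ℝ)⁻¹)^2 ≤ x - x ^ 2 := by
      have hsq : x ^ 2 ≤ 1/a * ((i:ℝ)⁻¹)^2 := by
        rw [hxeq, mul_pow]
        have h4 : (1/a)^2 ≤ 1/a := by
          have : (1:ℝ)/a ≤ 1 := by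
            rw [div_le_one ha0]; linarith
          nlinarith [one_div_pos.mpr ha0]
        exact mul_le_mul_of_nonneg_right h4 (sq_nonneg _)
      rw [hxeq] at hsq ⊢
      linarith
    linarith
  have hlogm_le : Real.log m ≤ Real.log n := by
    have : (m:ℝ) ≤ n := by linarith [hmr]
    exact Real.log_le_log (by exact_mod_cast Nat.cast_pos.mpr hm1) this
  have hlogn1_le : Real.log ((n:ℝ) - 1) ≤ Real.log n := by
    exact Real.log_le_log (by linarith) (by linarith)
  have hia : (0:ℝ) < 1/a := by positivity
  constructor
  · -- lower bound
    have hrw : ((n : ℝ) - 1) ^ ((1 : ℝ) / a) * Real.exp (-(Real.pi ^ 2 / 6) / a)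
        = Real.exp (Real.log ((n:ℝ) - 1) * (1/a) + -(Real.pi ^ 2 / 6) / a) := by
      rw [Real.rpow_def_of_pos (by linarith), Real.exp_add]
    rw [hrw, ← Real.exp_log hprodpos, hlogprod]
    apply Real.exp_le_exp.mpr
    have key : Real.log ((n:ℝ) - 1) * (1/a) + -(Real.pi ^ 2 / 6) / a
        ≤ (1/a) * S1 - (1/a) * S2 := by
      have e1 : Real.log ((n:ℝ) - 1) * (1/a) ≤ (1/a) * S1 := by
        rw [mul_comm]
        exact mul_le_mul_of_nonneg_left (le_trans hlogn1_le hS1lower) hia.le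
      have e2 : (1/a) * S2 ≤ (1/a) * (Real.pi ^ 2 / 6) :=
        mul_le_mul_of_nonneg_left hS2le hia.le
      have e3 : -(Real.pi ^ 2 / 6) / a = -((1/a) * (Real.pi ^ 2 / 6)) := by ring
      linarith [e3 ▸ le_refl (-(Real.pi ^ 2 / 6) / a)]
    linarith [hlb]
  · -- upper bound
    have hrw : Real.exp 1 * (n : ℝ) ^ ((1 : ℝ) / a)
        = Real.exp (1 + Real.log (n:ℝ) * (1/a)) := by
      rw [Real.rpow_def_of_pos hn0, Real.exp_add]
    rw [hrw, ← Real.exp_log hprodpos, hlogprod]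
    apply Real.exp_le_exp.mpr
    have key : (1/a) * S1 ≤ 1 + Real.log (n:ℝ) * (1/a) := by
      have e1 : (1/a) * S1 ≤ (1/a) * (1 + Real.log m) :=
        mul_le_mul_of_nonneg_left hS1upper hia.le
      have e2 : (1:ℝ)/a ≤ 1 := by rw [div_le_one ha0]; linarith
      have e3 : (1/a) * Real.log m ≤ Real.log n * (1/a) := by
        rw [mul_comm (Real.log (n:ℝ))]
        have hlogm0 : 0 ≤ Real.log m := Real.log_nonneg (by exact_mod_cast hm1)
        exact mul_le_mul_of_nonneg_left hlogm_le hia.le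
      have e4 : (1/a) * (1 + Real.log m) = 1/a + (1/a) * Real.log m := by ring
      linarith
    linarith [hub]
end

section
/- Let a = d - 2 ≥ 1 and f_n(t) = C(n)·e^{-t}(1-e^{-at})^{n-1} with C(n) = ∏_{i=1}^{n-1}(1+1/(a·i)). Then there exists γ ∈ (0,1) such that limsup_{n→∞} sup_{t ∈ (0,t_n)} f_{(d-1)n}(t)/f_n(t) ≤ 1 - γ, where t_n = (1/a)·log((n-1)a+1). -/
open Filter
open Topology

noncomputable section

/-- The density `fₙ(t) = C(n) e^{-t} (1 - e^{-a t})^{n-1}`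
with `C(n) = ∏_{i=1}^{n-1} (1 + 1/(a i))`. -/
def fdens (a : ℝ) (n : ℕ) (t : ℝ) : ℝ :=
  (∏ i ∈ Finset.Icc 1 (n - 1), (1 + 1 / (a * (i : ℝ)))) *
    (Real.exp (-t) * (1 - Real.exp (-a * t)) ^ (n - 1))

lemma fdens_pos {a t : ℝ} (ha : 0 < a) (ht : 0 < t) (n : ℕ) : 0 < fdens a n t := by
  unfold fdens
  have h1 : 0 < 1 - Real.exp (-a * t) := by
    have : Real.exp (-a * t) < 1 := by
      rw [Real.exp_lt_one_iff]
      nlinarith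
    linarith
  have h2 : (0:ℝ) < ∏ i ∈ Finset.Icc 1 (n - 1), (1 + 1 / (a * (i : ℝ))) := by
    apply Finset.prod_pos
    intro i hi
    have hi1 : 1 ≤ i := (Finset.mem_Icc.1 hi).1
    have : (0:ℝ) < a * i := by
      have : (1:ℝ) ≤ (i:ℝ) := by exact_mod_cast hi1
      nlinarith
    positivity
  positivity

set_option maxHeartbeats 1000000 in
/-- There exists `γ ∈ (0,1)` with
`limsup_n sup_{t ∈ (0,tₙ)} f_{(d-1)n}(t)/fₙ(t) ≤ 1 - γ`, where
`tₙ = (1/a) log((n-1)a + 1)` and `a = d - 2`. -/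
theorem density_ratio_limsup (d : ℕ) (hd : 3 ≤ d) (a : ℝ) (ha : a = (d : ℝ) - 2) :
    ∃ γ ∈ Set.Ioo (0 : ℝ) 1,
      Filter.limsup
        (fun n : ℕ =>
          sSup ((fun t : ℝ => fdens a ((d - 1) * n) t / fdens a n t) ''
            Set.Ioo 0 ((1 / a) * Real.log (((n : ℝ) - 1) * a + 1))))
        atTop ≤ 1 - γ := by
  have hd3 : (3:ℝ) ≤ (d:ℝ) := by exact_mod_cast hd
  have ha1 : (1:ℝ) ≤ a := by rw [ha]; linarith
  have ha0 : (0:ℝ) < a := by linarith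
  set L : ℝ := Real.exp ((1/a) * Real.log (a + 1) - 1) with hLdef
  have hL0 : 0 < L := Real.exp_pos _
  have hL1 : L < 1 := by
    rw [hLdef, Real.exp_lt_one_iff]
    have hlog : Real.log (a + 1) < a := by
      have := Real.log_lt_sub_one_of_pos (x := a + 1) (by linarith) (by intro h; linarith)
      linarith
    have h1a : 0 < 1/a := by positivity
    have : (1/a) * Real.log (a + 1) < (1/a) * a := by
      apply mul_lt_mul_of_pos_left hlog h1a
    rw [one_div_mul_cancel (ne_of_gt ha0)] at this
    linarith
  refine ⟨1 - L, ⟨by linarith, by linarith⟩, ?_⟩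
  have h1L : 1 - (1 - L) = L := by ring
  rw [h1L]
  set u : ℕ → ℝ := fun n : ℕ =>
      sSup ((fun t : ℝ => fdens a ((d - 1) * n) t / fdens a n t) ''
        Set.Ioo 0 ((1 / a) * Real.log (((n : ℝ) - 1) * a + 1))) with hudef
  set B : ℕ → ℝ := fun n : ℕ =>
      Real.exp ((1/a) * Real.log ((((d:ℝ)-1)*(n:ℝ) - 1)/((n:ℝ)-1)) - 1) with hBdef
  -- eventual bound u n ≤ B n
  have hub : ∀ᶠ n in atTop, u n ≤ B n := by
    filter_upwards [eventually_ge_atTop 2] with n hn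
    apply Real.sSup_le _ (le_of_lt (Real.exp_pos _))
    rintro x ⟨t, ht, rfl⟩
    obtain ⟨ht0, htn⟩ := ht
    set m : ℕ := (d - 1) * n with hmdef
    set k : ℕ := (d - 2) * n with hkdef
    set s : ℝ := 1 - Real.exp (-a * t) with hsdef
    set D : ℝ := ((n:ℝ) - 1) * a + 1 with hDdef
    have hn1 : (1:ℝ) ≤ (n:ℝ) - 1 := by
      have : (2:ℝ) ≤ (n:ℝ) := by exact_mod_cast hn
      linarith
    have hD1 : 1 < D := by nlinarith
    have hD0 : 0 < D := by linarith
    have hs0 : 0 < s := by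
      have : Real.exp (-a * t) < 1 := by
        rw [Real.exp_lt_one_iff]; nlinarith
      simp only [hsdef]; linarith
    have hsD : s < 1 - 1/D := by
      have hat : a * t < Real.log D := by
        have := (mul_lt_mul_iff_right₀ ha0).2 htn
        rw [← mul_assoc, mul_one_div, div_self (ne_of_gt ha0), one_mul] at this
        linarith
      have : Real.exp (-Real.log D) < Real.exp (-a * t) := by
        apply Real.exp_lt_exp.2; linarith
      rw [Real.exp_neg, Real.exp_log hD0] at this
      simp only [hsdef]
      rw [one_div]
      linarith
    set P : ℝ := ∏ i ∈ Finset.Icc n (m - 1), (1 + 1 / (a * (i : ℝ))) with hPdef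
    -- basic nat arithmetic
    have hm' : m = k + n := by
      simp only [hmdef, hkdef]
      have hd1 : d - 1 = (d - 2) + 1 := by omega
      rw [hd1, add_mul, one_mul]
    have hkn : n ≤ k := by
      simp only [hkdef]
      exact Nat.le_mul_of_pos_left n (by omega)
    -- key factorization
    have hmn : n - 1 ≤ m - 1 := by omega
    have hsplit : (∏ i ∈ Finset.Icc 1 (m - 1), (1 + 1 / (a * (i : ℝ))))
        = (∏ i ∈ Finset.Icc 1 (n - 1), (1 + 1 / (a * (i : ℝ)))) * P := by
      rw [hPdef]
      have e1 : Finset.Icc 1 (m - 1) = Finset.Ioc 0 (m - 1) := Finset.Icc_add_one_left_eq_Ioc 0 (m-1)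
      have e2 : Finset.Icc 1 (n - 1) = Finset.Ioc 0 (n - 1) := Finset.Icc_add_one_left_eq_Ioc 0 (n-1)
      have e3 : Finset.Icc n (m - 1) = Finset.Ioc (n-1) (m - 1) := by
        rw [← Finset.Icc_add_one_left_eq_Ioc]
        congr 1
        omega
      rw [e1, e2, e3]
      exact (Finset.prod_Ioc_consecutive _ (Nat.zero_le _) hmn).symm
    have hpow : s ^ (m - 1) = s ^ (n - 1) * s ^ k := by
      rw [← pow_add]
      congr 1
      omega
    have hkey : fdens a m t = fdens a n t * (P * s ^ k) := by
      unfold fdens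
      rw [hsplit]
      simp only [← hsdef]
      rw [hpow]
      ring
    have hfn : fdens a n t ≠ 0 := ne_of_gt (fdens_pos ha0 ht0 n)
    have hratio : fdens a m t / fdens a n t = P * s ^ k := by
      rw [hkey]
      exact mul_div_cancel_left₀ _ hfn
    -- bound P
    have hm1 : (1:ℝ) ≤ (m:ℝ) - 1 := by
      have : 4 ≤ m := by omega
      have : (4:ℝ) ≤ (m:ℝ) := by exact_mod_cast this
      linarith
    have hP1 : P ≤ Real.exp (∑ i ∈ Finset.Icc n (m - 1), 1 / (a * (i:ℝ))) := by
      rw [hPdef, Real.exp_sum]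
      apply Finset.prod_le_prod
      · intro i hi
        have hi1 : 1 ≤ i := le_trans (by omega) (Finset.mem_Icc.1 hi).1
        have : (0:ℝ) < a * i := by
          have : (1:ℝ) ≤ (i:ℝ) := by exact_mod_cast hi1
          nlinarith
        positivity
      · intro i hi
        have := Real.add_one_le_exp (1 / (a * (i:ℝ)))
        linarith
    have htel : ∑ i ∈ Finset.Icc n (m - 1), (1:ℝ) / (i:ℝ)
        ≤ Real.log ((m:ℝ) - 1) - Real.log ((n:ℝ) - 1) := by
      set f : ℕ → ℝ := fun i => Real.log ((i:ℝ) - 1) with hfdef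
      have hIco : Finset.Icc n (m - 1) = Finset.Ico n m := by
        rw [← Finset.Ico_add_one_right_eq_Icc]
        congr 1
        omega
      have step : ∀ i ∈ Finset.Ico n m, (1:ℝ)/(i:ℝ) ≤ f (i + 1) - f i := by
        intro i hi
        have hi2 : 2 ≤ i := le_trans hn (Finset.mem_Ico.1 hi).1
        have hi2' : (2:ℝ) ≤ (i:ℝ) := by exact_mod_cast hi2
        have hipos : (0:ℝ) < (i:ℝ) := by linarith
        have hi1pos : (0:ℝ) < (i:ℝ) - 1 := by linarith
        have hx : (0:ℝ) < ((i:ℝ) - 1)/(i:ℝ) := by positivity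
        have hlog := Real.log_le_sub_one_of_pos hx
        rw [Real.log_div (by linarith) (by linarith)] at hlog
        have harith : ((i:ℝ) - 1)/(i:ℝ) - 1 = -(1/(i:ℝ)) := by
          field_simp
          ring
        rw [harith] at hlog
        have hcast : f (i + 1) = Real.log (i:ℝ) := by
          simp only [hfdef]
          congr 1
          push_cast
          ring
        rw [hcast]
        simp only [hfdef]
        linarith
      calc ∑ i ∈ Finset.Icc n (m - 1), (1:ℝ)/(i:ℝ)
          = ∑ i ∈ Finset.Ico n m, (1:ℝ)/(i:ℝ) := by rw [hIco]
        _ ≤ ∑ i ∈ Finset.Ico n m, (f (i+1) - f i) := Finset.sum_le_sum step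
        _ = f m - f n := by
            have hnm : n ≤ m := by simp only [hmdef]; omega
            rw [Finset.sum_Ico_eq_sub _ hnm, Finset.sum_range_sub, Finset.sum_range_sub]
            ring
        _ = Real.log ((m:ℝ) - 1) - Real.log ((n:ℝ) - 1) := rfl
    have hsum : ∑ i ∈ Finset.Icc n (m - 1), 1 / (a * (i:ℝ))
        ≤ (1/a) * (Real.log ((m:ℝ) - 1) - Real.log ((n:ℝ) - 1)) := by
      have heq : ∑ i ∈ Finset.Icc n (m - 1), 1 / (a * (i:ℝ))
          = (1/a) * ∑ i ∈ Finset.Icc n (m - 1), (1:ℝ)/(i:ℝ) := by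
        rw [Finset.mul_sum]
        apply Finset.sum_congr rfl
        intro i _
        rw [one_div_mul_one_div]
      rw [heq]
      apply mul_le_mul_of_nonneg_left htel (by positivity)
    have hP2 : P ≤ Real.exp ((1/a) * Real.log (((m:ℝ) - 1)/((n:ℝ) - 1))) := by
      apply le_trans hP1
      apply Real.exp_le_exp.2
      rw [Real.log_div (by linarith) (by linarith)]
      exact hsum
    -- bound s^k
    have hkD : D ≤ (k:ℝ) := by
      have : (k:ℝ) = ((d:ℝ) - 2) * (n:ℝ) := by
        rw [hkdef]
        push_cast [Nat.cast_sub (by omega : 2 ≤ d)]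
        ring
      rw [this, hDdef, ← ha]
      nlinarith
    have hsk : s ^ k ≤ Real.exp (-1) := by
      have h1 : s ≤ Real.exp (-(1/D)) := by
        have := Real.add_one_le_exp (-(1/D))
        linarith
      have h2 : s ^ k ≤ Real.exp (-(1/D)) ^ k :=
        pow_le_pow_left₀ (le_of_lt hs0) h1 k
      have h3 : Real.exp (-(1/D)) ^ k = Real.exp ((k:ℝ) * (-(1/D))) :=
        (Real.exp_nat_mul _ k).symm
      have h4 : Real.exp ((k:ℝ) * (-(1/D))) ≤ Real.exp (-1) := by
        apply Real.exp_le_exp.2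
        have hk0 : (0:ℝ) < (k:ℝ) := by
          have : 0 < k := by omega
          exact_mod_cast this
        rw [mul_neg, mul_one_div, neg_le_neg_iff]
        rw [le_div_iff₀ hD0]
        linarith
      rw [h3] at h2
      exact le_trans h2 h4
    -- combine
    have hcomb : fdens a m t / fdens a n t
        ≤ Real.exp ((1/a) * Real.log (((m:ℝ) - 1)/((n:ℝ) - 1)) - 1) := by
      calc fdens a m t / fdens a n t = P * s ^ k := hratio
        _ ≤ Real.exp ((1/a) * Real.log (((m:ℝ) - 1)/((n:ℝ) - 1))) * Real.exp (-1) := by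
            apply mul_le_mul hP2 hsk (pow_nonneg (le_of_lt hs0) k) (le_of_lt (Real.exp_pos _))
        _ = Real.exp ((1/a) * Real.log (((m:ℝ) - 1)/((n:ℝ) - 1)) - 1) := by
            rw [← Real.exp_add]; ring_nf
    have hBeq : Real.exp ((1/a) * Real.log (((m:ℝ) - 1)/((n:ℝ) - 1)) - 1) = B n := by
      simp only [hBdef]
      congr 3
      rw [hmdef]
      push_cast [Nat.cast_sub (by omega : 1 ≤ d)]
      ring
    exact hcomb.trans_eq hBeq
  -- limit of B is L
  have hdne : ((d:ℝ) - 1) ≠ 0 := by linarith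
  have hQ : Tendsto (fun n : ℕ => (((d:ℝ)-1)*(n:ℝ) - 1)/((n:ℝ)-1)) atTop (𝓝 ((d:ℝ)-1)) := by
    have heq : ∀ᶠ n : ℕ in atTop,
        (((d:ℝ)-1) - 1/(n:ℝ))/(1 - 1/(n:ℝ)) = (((d:ℝ)-1)*(n:ℝ) - 1)/((n:ℝ)-1) := by
      filter_upwards [eventually_ge_atTop 2] with n hn
      have hn2 : (2:ℝ) ≤ (n:ℝ) := by exact_mod_cast hn
      have hn0 : (n:ℝ) ≠ 0 := by linarith
      have hn1 : (n:ℝ) - 1 ≠ 0 := by intro h; nlinarith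
      field_simp
      try ring
    have hlim2 : Tendsto (fun n : ℕ => (((d:ℝ)-1) - 1/(n:ℝ))/(1 - 1/(n:ℝ))) atTop
        (𝓝 ((d:ℝ)-1)) := by
      have h1 : Tendsto (fun n : ℕ => ((d:ℝ)-1) - 1/(n:ℝ)) atTop (𝓝 ((d:ℝ)-1)) := by
        simpa using (tendsto_const_nhds : Tendsto (fun _ : ℕ => (d:ℝ)-1) atTop (𝓝 ((d:ℝ)-1))).sub tendsto_one_div_atTop_nhds_zero_nat
      have h2 : Tendsto (fun n : ℕ => (1:ℝ) - 1/(n:ℝ)) atTop (𝓝 1) := by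
        simpa using (tendsto_const_nhds : Tendsto (fun _ : ℕ => (1:ℝ)) atTop (𝓝 (1:ℝ))).sub tendsto_one_div_atTop_nhds_zero_nat
      convert h1.div h2 one_ne_zero using 2 <;> simp
    exact Tendsto.congr' heq hlim2
  have hBL : Tendsto B atTop (𝓝 L) := by
    have hlog : Tendsto (fun n : ℕ => Real.log ((((d:ℝ)-1)*(n:ℝ) - 1)/((n:ℝ)-1))) atTop
        (𝓝 (Real.log ((d:ℝ)-1))) := ((Real.continuousAt_log hdne).tendsto).comp hQ
    have harg : Tendsto (fun n : ℕ =>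
        (1/a) * Real.log ((((d:ℝ)-1)*(n:ℝ) - 1)/((n:ℝ)-1)) - 1) atTop
        (𝓝 ((1/a) * Real.log ((d:ℝ)-1) - 1)) := (hlog.const_mul _).sub_const 1
    have hfin := (Real.continuous_exp.continuousAt.tendsto).comp harg
    have hval : Real.exp ((1/a) * Real.log ((d:ℝ)-1) - 1) = L := by
      rw [hLdef]
      congr 3
      rw [ha]; ring
    rw [hval] at hfin
    exact hfin
  -- conclude
  have h0u : ∀ n, 0 ≤ u n := by
    intro n
    apply Real.sSup_nonneg
    rintro x ⟨t, ht, rfl⟩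
    have ht0 : 0 < t := ht.1
    exact le_of_lt (div_pos (fdens_pos ha0 ht0 _) (fdens_pos ha0 ht0 _))
  have hcob : IsCoboundedUnder (· ≤ ·) atTop u :=
    IsBoundedUnder.isCoboundedUnder_le (isBoundedUnder_of ⟨0, fun n => h0u n⟩)
  have hbdd : IsBoundedUnder (· ≤ ·) atTop B := hBL.isBoundedUnder_le
  calc limsup u atTop ≤ limsup B atTop := limsup_le_limsup hub hcob hbdd
    _ = L := hBL.limsup_eq
end
end

section
/- Let N_1, N_2, N_3 be i.i.d. geometric random variables on {0,1,2,...} with P(N_j = n) = p(1-p)^n, where p = e^{-t}. Then the probability that max_j N_j ≤ (1/2)·(N_1+N_2+N_3) converges to 1/4 as t → ∞ (i.e., as p → 0); more precisely, it equals (1-p)²/4 + O(p) as p → 0. -/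
open MeasureTheory ProbabilityTheory Filter Asymptotics

namespace ThreeGeomAux

variable {Ω : Type*} [MeasurableSpace Ω] (μ : Measure Ω) [IsProbabilityMeasure μ]

lemma tail (f : Ω → ℕ) (hf : Measurable f) {p : ℝ} (hp : p ∈ Set.Ioo (0:ℝ) 1)
    (hg : ∀ n : ℕ, μ {ω | f ω = n} = ENNReal.ofReal (p * (1 - p) ^ n)) (n : ℕ) :
    μ {ω | n ≤ f ω} = ENNReal.ofReal ((1 - p) ^ n) := by
  obtain ⟨hp0, hp1⟩ := hp
  have hq0 : (0:ℝ) ≤ 1 - p := by linarith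
  have hset : {ω | n ≤ f ω} = ⋃ m : ℕ, {ω | f ω = n + m} := by
    ext ω
    simp only [Set.mem_setOf_eq, Set.mem_iUnion]
    constructor
    · intro h; exact ⟨f ω - n, by omega⟩
    · rintro ⟨m, hm⟩; omega
  have hdisj : Pairwise (Function.onFun Disjoint fun m : ℕ => {ω | f ω = n + m}) := by
    intro a b hab
    rw [Function.onFun, Set.disjoint_left]
    intro ω h1 h2
    simp only [Set.mem_setOf_eq] at h1 h2
    omega
  rw [hset, measure_iUnion hdisj (fun m => hf (measurableSet_singleton (n + m)))]
  calc ∑' m : ℕ, μ {ω | f ω = n + m}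
      = ∑' m : ℕ, ENNReal.ofReal ((1 - p) ^ n * p) * ENNReal.ofReal (1 - p) ^ m := by
        refine tsum_congr fun m => ?_
        rw [hg, show p * (1 - p) ^ (n + m) = ((1 - p) ^ n * p) * (1 - p) ^ m by
          rw [pow_add]; ring, ENNReal.ofReal_mul (by positivity), ENNReal.ofReal_pow hq0]
    _ = ENNReal.ofReal ((1 - p) ^ n * p) * (1 - ENNReal.ofReal (1 - p))⁻¹ := by
        rw [ENNReal.tsum_mul_left, ENNReal.tsum_geometric]
    _ = ENNReal.ofReal ((1 - p) ^ n) := by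
        rw [show (1:ENNReal) - ENNReal.ofReal (1 - p) = ENNReal.ofReal p by
            rw [← ENNReal.ofReal_one, ← ENNReal.ofReal_sub _ hq0]; norm_num,
          ← ENNReal.ofReal_inv_of_pos hp0, ← ENNReal.ofReal_mul (by positivity)]
        congr 1
        field_simp

private lemma real_id (p q : ℝ) (m n : ℕ) :
    p * q ^ m * (p * q ^ n) * q ^ (m + n + 1) = p ^ 2 * q * ((q ^ 2) ^ m * (q ^ 2) ^ n) := by
  rw [pow_add, pow_add]; ring

lemma exceed (f g h : Ω → ℕ) (hfm : Measurable f) (hgm : Measurable g) (hhm : Measurable h)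
    {p : ℝ} (hp : p ∈ Set.Ioo (0:ℝ) 1)
    (hprod : ∀ m n k : ℕ, μ ({ω | g ω = m} ∩ {ω | h ω = n} ∩ {ω | k ≤ f ω})
        = μ {ω | g ω = m} * μ {ω | h ω = n} * μ {ω | k ≤ f ω})
    (hgg : ∀ n : ℕ, μ {ω | g ω = n} = ENNReal.ofReal (p * (1 - p) ^ n))
    (hgh : ∀ n : ℕ, μ {ω | h ω = n} = ENNReal.ofReal (p * (1 - p) ^ n))
    (htail : ∀ n : ℕ, μ {ω | n ≤ f ω} = ENNReal.ofReal ((1 - p) ^ n)) :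
    μ {ω | g ω + h ω < f ω} = ENNReal.ofReal ((1 - p) / (2 - p) ^ 2) := by
  obtain ⟨hp0, hp1⟩ := hp
  have hq0 : (0:ℝ) ≤ 1 - p := by linarith
  have hset : {ω | g ω + h ω < f ω}
      = ⋃ mn : ℕ × ℕ, ({ω | g ω = mn.1} ∩ {ω | h ω = mn.2} ∩ {ω | mn.1 + mn.2 + 1 ≤ f ω}) := by
    ext ω
    simp only [Set.mem_setOf_eq, Set.mem_iUnion, Set.mem_inter_iff]
    constructor
    · intro hlt; exact ⟨(g ω, h ω), ⟨rfl, rfl⟩, hlt⟩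
    · rintro ⟨mn, ⟨h1, h2⟩, h3⟩; omega
  have hdisj : Pairwise (Function.onFun Disjoint fun mn : ℕ × ℕ =>
      ({ω | g ω = mn.1} ∩ {ω | h ω = mn.2} ∩ {ω | mn.1 + mn.2 + 1 ≤ f ω})) := by
    intro a b hab
    rw [Function.onFun, Set.disjoint_left]
    rintro ω ⟨⟨h1, h2⟩, -⟩ ⟨⟨h3, h4⟩, -⟩
    simp only [Set.mem_setOf_eq] at h1 h2 h3 h4
    exact hab (Prod.ext_iff.mpr ⟨by omega, by omega⟩)
  have hmsbl : ∀ mn : ℕ × ℕ, MeasurableSet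
      ({ω | g ω = mn.1} ∩ {ω | h ω = mn.2} ∩ {ω | mn.1 + mn.2 + 1 ≤ f ω}) := by
    intro mn
    refine MeasurableSet.inter (MeasurableSet.inter ?_ ?_) ?_
    · exact hgm (measurableSet_singleton _)
    · exact hhm (measurableSet_singleton _)
    · exact hfm ((Set.to_countable (Set.Ici (mn.1 + mn.2 + 1))).measurableSet)
  rw [hset, measure_iUnion hdisj hmsbl]
  have ha1 : ENNReal.ofReal ((1 - p) ^ 2) < 1 := by
    rw [← ENNReal.ofReal_one]
    exact ENNReal.ofReal_lt_ofReal_iff_of_nonneg (by positivity) |>.mpr (by nlinarith)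
  calc ∑' mn : ℕ × ℕ, μ ({ω | g ω = mn.1} ∩ {ω | h ω = mn.2} ∩ {ω | mn.1 + mn.2 + 1 ≤ f ω})
      = ∑' mn : ℕ × ℕ, ENNReal.ofReal (p ^ 2 * (1 - p)) *
          (ENNReal.ofReal ((1 - p) ^ 2) ^ mn.1 * ENNReal.ofReal ((1 - p) ^ 2) ^ mn.2) := by
        refine tsum_congr fun mn => ?_
        rw [hprod, hgg, hgh, htail,
          ← ENNReal.ofReal_pow (by positivity), ← ENNReal.ofReal_pow (by positivity),
          ← ENNReal.ofReal_mul (by positivity), ← ENNReal.ofReal_mul (by positivity),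
          ← ENNReal.ofReal_mul (by positivity), ← ENNReal.ofReal_mul (by positivity)]
        congr 1
        exact real_id p (1 - p) mn.1 mn.2
    _ = ENNReal.ofReal (p ^ 2 * (1 - p)) *
          ((1 - ENNReal.ofReal ((1 - p) ^ 2))⁻¹ * (1 - ENNReal.ofReal ((1 - p) ^ 2))⁻¹) := by
        rw [ENNReal.tsum_mul_left]
        congr 1
        rw [ENNReal.tsum_prod']
        calc ∑' m : ℕ, ∑' n : ℕ, ENNReal.ofReal ((1 - p) ^ 2) ^ m * ENNReal.ofReal ((1 - p) ^ 2) ^ n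
            = ∑' m : ℕ, ENNReal.ofReal ((1 - p) ^ 2) ^ m *
                ∑' n : ℕ, ENNReal.ofReal ((1 - p) ^ 2) ^ n := by
              exact tsum_congr fun m => ENNReal.tsum_mul_left
          _ = (∑' m : ℕ, ENNReal.ofReal ((1 - p) ^ 2) ^ m) *
                ∑' n : ℕ, ENNReal.ofReal ((1 - p) ^ 2) ^ n := ENNReal.tsum_mul_right
          _ = (1 - ENNReal.ofReal ((1 - p) ^ 2))⁻¹ * (1 - ENNReal.ofReal ((1 - p) ^ 2))⁻¹ := by
              rw [ENNReal.tsum_geometric]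
    _ = ENNReal.ofReal ((1 - p) / (2 - p) ^ 2) := by
        have h1 : (1:ENNReal) - ENNReal.ofReal ((1 - p) ^ 2) = ENNReal.ofReal (1 - (1 - p) ^ 2) := by
          rw [← ENNReal.ofReal_one, ← ENNReal.ofReal_sub _ (by positivity)]
        have h2 : (0:ℝ) < 1 - (1 - p) ^ 2 := by nlinarith
        rw [h1, ← ENNReal.ofReal_inv_of_pos h2, ← ENNReal.ofReal_mul (by positivity),
          ← ENNReal.ofReal_mul (by positivity)]
        congr 1
        have h3 : (1:ℝ) - (1 - p) ^ 2 = p * (2 - p) := by ring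
        rw [h3]
        have hp2 : (2:ℝ) - p ≠ 0 := by linarith
        field_simp

lemma event (f : Fin 3 → Ω → ℕ) (hm : ∀ j, Measurable (f j))
    (hindep : iIndepFun f μ)
    {p : ℝ} (hp : p ∈ Set.Ioo (0:ℝ) 1)
    (hg : ∀ j n, μ {ω | f j ω = n} = ENNReal.ofReal (p * (1 - p) ^ n)) :
    μ {ω | 2 * max (f 0 ω) (max (f 1 ω) (f 2 ω)) ≤ f 0 ω + f 1 ω + f 2 ω}
      = ENNReal.ofReal (1 - 3 * ((1 - p) / (2 - p) ^ 2)) := by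
  obtain ⟨hp0, hp1⟩ := hp
  have hr0 : (0:ℝ) ≤ (1 - p) / (2 - p) ^ 2 := div_nonneg (by linarith) (by positivity)
  have hprodgen : ∀ (i j k : Fin 3), i ≠ j → i ≠ k → j ≠ k → ∀ m n s : ℕ,
      μ ({ω | f i ω = m} ∩ {ω | f j ω = n} ∩ {ω | s ≤ f k ω})
        = μ {ω | f i ω = m} * μ {ω | f j ω = n} * μ {ω | s ≤ f k ω} := by
    intro i j k hij hik hjk m n s
    have hpair : IndepFun (fun ω => (f i ω, f j ω)) (f k) μ :=
      hindep.indepFun_prodMk hm i j k hik hjk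
    have h2 : IndepFun (f i) (f j) μ := hindep.indepFun hij
    have e : (fun ω => (f i ω, f j ω)) ⁻¹' (({m} : Set ℕ) ×ˢ ({n} : Set ℕ))
        = f i ⁻¹' {m} ∩ f j ⁻¹' {n} := rfl
    calc μ ({ω | f i ω = m} ∩ {ω | f j ω = n} ∩ {ω | s ≤ f k ω})
        = μ ((fun ω => (f i ω, f j ω)) ⁻¹' (({m} : Set ℕ) ×ˢ ({n} : Set ℕ))
            ∩ f k ⁻¹' Set.Ici s) := rfl
      _ = μ ((fun ω => (f i ω, f j ω)) ⁻¹' (({m} : Set ℕ) ×ˢ ({n} : Set ℕ)))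
            * μ (f k ⁻¹' Set.Ici s) :=
          hpair.measure_inter_preimage_eq_mul _ _ ((Set.to_countable _).measurableSet)
            ((Set.to_countable _).measurableSet)
      _ = μ (f i ⁻¹' {m}) * μ (f j ⁻¹' {n}) * μ (f k ⁻¹' Set.Ici s) := by
          rw [e, h2.measure_inter_preimage_eq_mul _ _ ((Set.to_countable _).measurableSet)
            ((Set.to_countable _).measurableSet)]
      _ = μ {ω | f i ω = m} * μ {ω | f j ω = n} * μ {ω | s ≤ f k ω} := rfl
  have hA : ∀ (i j k : Fin 3), i ≠ j → i ≠ k → j ≠ k →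
      μ {ω | f i ω + f j ω < f k ω} = ENNReal.ofReal ((1 - p) / (2 - p) ^ 2) :=
    fun i j k hij hik hjk => exceed μ (f k) (f i) (f j) (hm k) (hm i) (hm j) ⟨hp0, hp1⟩
      (hprodgen i j k hij hik hjk) (hg i) (hg j) (tail μ (f k) (hm k) ⟨hp0, hp1⟩ (hg k))
  have hms : ∀ (i j k : Fin 3), MeasurableSet {ω | f i ω + f j ω < f k ω} := by
    intro i j k
    have hmap : Measurable fun ω => (f i ω, f j ω, f k ω) :=
      (hm i).prodMk ((hm j).prodMk (hm k))
    exact hmap ((Set.to_countable {q : ℕ × ℕ × ℕ | q.1 + q.2.1 < q.2.2}).measurableSet)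
  have hTc : {ω | 2 * max (f 0 ω) (max (f 1 ω) (f 2 ω)) ≤ f 0 ω + f 1 ω + f 2 ω}ᶜ
      = {ω | f 1 ω + f 2 ω < f 0 ω}
        ∪ ({ω | f 0 ω + f 2 ω < f 1 ω} ∪ {ω | f 0 ω + f 1 ω < f 2 ω}) := by
    ext ω
    simp only [Set.mem_compl_iff, Set.mem_setOf_eq, Set.mem_union, not_le, Nat.max_def]
    split_ifs <;> omega
  have hd1 : Disjoint {ω | f 0 ω + f 2 ω < f 1 ω} {ω | f 0 ω + f 1 ω < f 2 ω} := by
    rw [Set.disjoint_left]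
    intro ω h1 h2
    simp only [Set.mem_setOf_eq] at h1 h2
    omega
  have hd0 : Disjoint {ω | f 1 ω + f 2 ω < f 0 ω}
      ({ω | f 0 ω + f 2 ω < f 1 ω} ∪ {ω | f 0 ω + f 1 ω < f 2 ω}) := by
    rw [Set.disjoint_union_right]
    constructor <;>
    · rw [Set.disjoint_left]
      intro ω h1 h2
      simp only [Set.mem_setOf_eq] at h1 h2
      omega
  have hCm : MeasurableSet ({ω | f 1 ω + f 2 ω < f 0 ω}
      ∪ ({ω | f 0 ω + f 2 ω < f 1 ω} ∪ {ω | f 0 ω + f 1 ω < f 2 ω})) :=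
    (hms 1 2 0).union ((hms 0 2 1).union (hms 0 1 2))
  have hμc : μ ({ω | 2 * max (f 0 ω) (max (f 1 ω) (f 2 ω)) ≤ f 0 ω + f 1 ω + f 2 ω}ᶜ)
      = ENNReal.ofReal (3 * ((1 - p) / (2 - p) ^ 2)) := by
    rw [hTc, measure_union hd0 ((hms 0 2 1).union (hms 0 1 2)),
      measure_union hd1 (hms 0 1 2),
      hA 1 2 0 (by decide) (by decide) (by decide),
      hA 0 2 1 (by decide) (by decide) (by decide),
      hA 0 1 2 (by decide) (by decide) (by decide),
      ← ENNReal.ofReal_add hr0 hr0, ← ENNReal.ofReal_add hr0 (by linarith)]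
    congr 1
    ring
  calc μ {ω | 2 * max (f 0 ω) (max (f 1 ω) (f 2 ω)) ≤ f 0 ω + f 1 ω + f 2 ω}
      = μ (({ω | 2 * max (f 0 ω) (max (f 1 ω) (f 2 ω)) ≤ f 0 ω + f 1 ω + f 2 ω}ᶜ)ᶜ) := by
        rw [compl_compl]
    _ = 1 - μ ({ω | 2 * max (f 0 ω) (max (f 1 ω) (f 2 ω)) ≤ f 0 ω + f 1 ω + f 2 ω}ᶜ) :=
        prob_compl_eq_one_sub (hTc ▸ hCm)
    _ = ENNReal.ofReal (1 - 3 * ((1 - p) / (2 - p) ^ 2)) := by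
        rw [hμc, ← ENNReal.ofReal_one, ← ENNReal.ofReal_sub _ (by linarith)]

end ThreeGeomAux

open ThreeGeomAux in
/-- For i.i.d. geometric random variables `N₁, N₂, N₃` with `P(N = n) = p(1-p)ⁿ`,
the probability that `max_j N_j ≤ (1/2)(N₁+N₂+N₃)` converges to `1/4` as `p → 0⁺`;
more precisely it equals `(1-p)²/4 + O(p)` as `p → 0⁺`. -/
theorem three_geometric_balance {Ω : Type*} [MeasurableSpace Ω] (μ : Measure Ω)
    [IsProbabilityMeasure μ] (N : ℝ → Fin 3 → Ω → ℕ)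
    (hmeas : ∀ p j, Measurable (N p j))
    (hindep : ∀ p ∈ Set.Ioo (0 : ℝ) 1, iIndepFun (N p) μ)
    (hgeom : ∀ p ∈ Set.Ioo (0 : ℝ) 1, ∀ j : Fin 3, ∀ n : ℕ,
      μ {ω | N p j ω = n} = ENNReal.ofReal (p * (1 - p) ^ n)) :
    Filter.Tendsto
        (fun p : ℝ =>
          (μ {ω | 2 * max (N p 0 ω) (max (N p 1 ω) (N p 2 ω)) ≤
              N p 0 ω + N p 1 ω + N p 2 ω}).toReal)
        (nhdsWithin 0 (Set.Ioi 0)) (nhds (1 / 4)) ∧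
      (fun p : ℝ =>
          (μ {ω | 2 * max (N p 0 ω) (max (N p 1 ω) (N p 2 ω)) ≤
              N p 0 ω + N p 1 ω + N p 2 ω}).toReal - (1 - p) ^ 2 / 4)
        =O[nhdsWithin 0 (Set.Ioi 0)] fun p : ℝ => p := by
  have key : (fun x : ℝ =>
      (μ {ω | 2 * max (N x 0 ω) (max (N x 1 ω) (N x 2 ω)) ≤
          N x 0 ω + N x 1 ω + N x 2 ω}).toReal)
      =ᶠ[nhdsWithin 0 (Set.Ioi 0)] (fun x : ℝ => 1 - 3 * ((1 - x) / (2 - x) ^ 2)) := by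
    filter_upwards [Ioo_mem_nhdsGT_of_mem (by norm_num : (0:ℝ) ∈ Set.Ico 0 1)] with x hx
    rw [event μ (N x) (hmeas x) (hindep x hx) hx (hgeom x hx)]
    obtain ⟨hx0, hx1⟩ := hx
    have hd : (0:ℝ) < (2 - x) ^ 2 := by nlinarith
    have hle : 3 * ((1 - x) / (2 - x) ^ 2) ≤ 1 := by
      rw [← mul_div_assoc, div_le_one hd]
      nlinarith
    exact ENNReal.toReal_ofReal (by linarith)
  have hcont : ContinuousAt (fun x : ℝ => 1 - 3 * ((1 - x) / (2 - x) ^ 2)) 0 := by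
    apply ContinuousAt.sub continuousAt_const
    apply ContinuousAt.mul continuousAt_const
    exact ContinuousAt.div (by fun_prop) (by fun_prop) (by norm_num)
  constructor
  · have h0 : (fun x : ℝ => 1 - 3 * ((1 - x) / (2 - x) ^ 2)) 0 = 1 / 4 := by norm_num
    have ht : Filter.Tendsto (fun x : ℝ => 1 - 3 * ((1 - x) / (2 - x) ^ 2))
        (nhdsWithin 0 (Set.Ioi 0)) (nhds (1 / 4)) := by
      rw [← h0]
      exact (hcont.tendsto).mono_left nhdsWithin_le_nhds
    exact ht.congr' key.symm
  · have hG : DifferentiableAt ℝ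
        (fun x : ℝ => (1 - 3 * ((1 - x) / (2 - x) ^ 2)) - (1 - x) ^ 2 / 4) 0 := by
      apply DifferentiableAt.sub
      · apply DifferentiableAt.sub (differentiableAt_const _)
        apply DifferentiableAt.const_mul
        exact DifferentiableAt.div (by fun_prop) (by fun_prop) (by norm_num)
      · fun_prop
    have hbig := hG.isBigO_sub
    have hbig' := hbig.mono (nhdsWithin_le_nhds (s := Set.Ioi (0:ℝ)))
    have hG0 : (fun x : ℝ => (1 - 3 * ((1 - x) / (2 - x) ^ 2)) - (1 - x) ^ 2 / 4) 0 = 0 := by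
      norm_num
    refine hbig'.congr' ?_ ?_
    · filter_upwards [key] with x hx
      rw [hx]
      norm_num
    · filter_upwards with x
      simp
end
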